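/- Let A be a unital ℂ-algebra and let φ̃ : A → G be a ℂ-linear map with φ̃(1) = 1, with G-valued cumulant functionals (κ̃_n)_{n≥1}. Let x_1, ..., x_s ∈ A, let 1 ≤ s_1 < s_2 < ⋯ < s_n = s, and set a_1 = x_1 ⋯ x_{s_1}, a_2 = x_{s_1+1} ⋯ x_{s_2}, ..., a_n = x_{s_{n−1}+1} ⋯ x_{s_n}. Let θ ∈ NC(s) be the interval partition with blocks {1, ..., s_1}, {s_1+1, ..., s_2}, ..., {s_{n−1}+1, ..., s_n}. Then κ̃_n(a_1, ..., a_n) = Σ κ̃_π(x_1, ..., x_s), where the sum is over all π ∈ NC(s) such that the only non-crossing partition of {1, ..., s} which is ≥ π and ≥ θ in reverse refinement order is the one-block partition 1_s. -/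

import Mathlib

set_option linter.unusedSectionVars false
set_option linter.unusedVariables false
set_option maxHeartbeats 1000000


namespace InfFree

open scoped BigOperators

/-- `π` is a partition of `Fin n` into nonempty blocks. -/
def IsPartition {n : ℕ} (π : Finset (Finset (Fin n))) : Prop :=
  (∀ V ∈ π, V.Nonempty) ∧ ∀ i : Fin n, ∃! V : Finset (Fin n), V ∈ π ∧ i ∈ V

/-- `π` is non-crossing: there are no `p < q < r < s` with `p, r` in one block and
`q, s` in another block. -/
def IsNonCrossing {n : ℕ} (π : Finset (Finset (Fin n))) : Prop :=
  ∀ p q r s : Fin n, p < q → q < r → r < s →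
    ∀ V ∈ π, ∀ W ∈ π, p ∈ V → r ∈ V → q ∈ W → s ∈ W → V = W

open Classical in
/-- The finset `NC n` of non-crossing partitions of `Fin n`. -/
noncomputable def NC (n : ℕ) : Finset (Finset (Finset (Fin n))) :=
  Finset.univ.filter fun π => IsPartition π ∧ IsNonCrossing π

/-- Restriction of an `n`-tuple to a subset `V ⊆ Fin n`, listed in increasing order. -/
def restrict {α : Type*} {n : ℕ} (a : Fin n → α) (V : Finset (Fin n)) :
    Fin V.card → α :=
  fun i => a (V.orderIsoOfFin rfl i).1

/-- `κ` is the family of `R`-valued non-crossing cumulant functionals of `φ`, i.e.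
the moment-cumulant formulas hold. -/
def MomentCumulant {A : Type*} [Ring A] {R : Type*} [CommRing R]
    (φ : A → R) (κ : ∀ n : ℕ, (Fin n → A) → R) : Prop :=
  ∀ (n : ℕ), 1 ≤ n → ∀ a : Fin n → A,
    φ (List.ofFn a).prod = ∑ π ∈ NC n, ∏ V ∈ π, κ V.card (restrict a V)

/-- `κ'` is the family of infinitesimal non-crossing cumulant functionals of
`(φ, φ')`, where `κ` is the family of non-crossing cumulant functionals of `φ`. -/
def InfMomentCumulant {A : Type*} [Ring A]
    (φ' : A → ℂ) (κ κ' : ∀ n : ℕ, (Fin n → A) → ℂ) : Prop :=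
  ∀ (n : ℕ), 1 ≤ n → ∀ a : Fin n → A,
    φ' (List.ofFn a).prod =
      ∑ π ∈ NC n, ∑ V ∈ π,
        κ' V.card (restrict a V) * ∏ W ∈ π.erase V, κ W.card (restrict a W)

/-- Consecutive indices are distinct. -/
def Alternating {n k : ℕ} (i : Fin n → Fin k) : Prop :=
  ∀ (m : ℕ) (h : m + 1 < n), i ⟨m, Nat.lt_of_succ_lt h⟩ ≠ i ⟨m + 1, h⟩

/-- Freeness of the family of subsets `S` with respect to `φ`. -/
def FreeSets {A : Type*} [Ring A] {k : ℕ} (φ : A → ℂ) (S : Fin k → Set A) : Prop :=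
  ∀ (n : ℕ), 1 ≤ n → ∀ i : Fin n → Fin k, Alternating i →
    ∀ a : Fin n → A, (∀ m, a m ∈ S (i m)) → (∀ m, φ (a m) = 0) →
      φ (List.ofFn a).prod = 0

/-- Infinitesimal freeness of the family of subsets `S` with respect to `(φ, φ')`. -/
def InfFreeSets {A : Type*} [Ring A] {k : ℕ} (φ φ' : A → ℂ) (S : Fin k → Set A) : Prop :=
  ∀ (n : ℕ) (hn : 1 ≤ n) (i : Fin n → Fin k), Alternating i →
    ∀ a : Fin n → A, (∀ m, a m ∈ S (i m)) → (∀ m, φ (a m) = 0) →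
      φ (List.ofFn a).prod = 0 ∧
      ((Odd n ∧ ∀ m : Fin n, i m = i m.rev) →
        φ' (List.ofFn a).prod =
          (∏ j : Fin ((n - 1) / 2),
              φ (a ⟨j, by have := j.isLt; omega⟩ *
                 a ⟨n - 1 - j, by have := j.isLt; omega⟩)) *
            φ' (a ⟨n / 2, by omega⟩)) ∧
      (¬(Odd n ∧ ∀ m : Fin n, i m = i m.rev) → φ' (List.ofFn a).prod = 0)

/-- Reverse-refinement order on partitions: every block of `π` is contained in
some block of `ρ`. -/
def leP {n : ℕ} (π ρ : Finset (Finset (Fin n))) : Prop :=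
  ∀ V ∈ π, ∃ W ∈ ρ, V ⊆ W

open Classical in
/-- The `j`-th interval block `{s_{j-1}+1, …, s_j}` (in 0-indexed form:
`[s_{j-1}, s_j)`) determined by the boundary data `sfun`. -/
noncomputable def intervalBlock {n s : ℕ} (sfun : Fin n → ℕ) (j : Fin n) :
    Finset (Fin s) :=
  Finset.univ.filter fun m =>
    (if (j : ℕ) = 0 then 0 else sfun ⟨(j : ℕ) - 1, by have := j.isLt; omega⟩) ≤ (m : ℕ)
      ∧ (m : ℕ) < sfun j

/-- The interval partition `θ` with blocks `{1,…,s_1}, {s_1+1,…,s_2}, …`. -/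
noncomputable def intervalPartition {n : ℕ} (sfun : Fin n → ℕ) (s : ℕ) :
    Finset (Finset (Fin s)) :=
  Finset.image (intervalBlock (s := s) sfun) Finset.univ

section CrossSec

variable {α : Type*} [LinearOrder α]

/-- Two finsets cross. -/
def Cross (A B : Finset α) : Prop :=
  ∃ p q r s : α, p < q ∧ q < r ∧ r < s ∧
    ((p ∈ A ∧ r ∈ A ∧ q ∈ B ∧ s ∈ B) ∨ (p ∈ B ∧ r ∈ B ∧ q ∈ A ∧ s ∈ A))

lemma Cross.symm {A B : Finset α} (h : Cross A B) : Cross B A := by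
  obtain ⟨p, q, r, s, h1, h2, h3, h4⟩ := h
  exact ⟨p, q, r, s, h1, h2, h3, h4.symm⟩

lemma not_cross_singleton_right (A : Finset α) (u : α) : ¬ Cross A {u} := by
  rintro ⟨p, q, r, s, h1, h2, h3, h4 | h4⟩
  · have hq : q = u := by simpa using h4.2.2.1
    have hs : s = u := by simpa using h4.2.2.2
    exact absurd (hq ▸ hs ▸ (h2.trans h3)) (lt_irrefl _)
  · have hq : p = u := by simpa using h4.1
    have hs : r = u := by simpa using h4.2.1
    exact absurd (hq ▸ hs ▸ (h1.trans h2)) (lt_irrefl _)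

lemma not_cross_singleton_left (A : Finset α) (u : α) : ¬ Cross {u} A :=
  fun h => not_cross_singleton_right A u h.symm

/-- Key union lemma: if `A` and `B` both do not cross `C`, they share a point `e`,
and `C` is disjoint from `A ∪ B`, then `A ∪ B` does not cross `C`. -/
lemma not_cross_union {A B C : Finset α} (hAC : ¬ Cross A C) (hBC : ¬ Cross B C)
    {e : α} (heA : e ∈ A) (heB : e ∈ B)
    (hd : ∀ c ∈ C, c ∉ A ∧ c ∉ B) : ¬ Cross (A ∪ B) C := by
  rintro ⟨p, q, r, s, h1, h2, h3, h4 | h4⟩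
  · -- p, r ∈ A ∪ B ; q, s ∈ C
    obtain ⟨hp, hr, hq, hs⟩ := h4
    rw [Finset.mem_union] at hp hr
    have heq : e ≠ q := fun h => ((hd q hq).1 (h ▸ heA))
    have hes : e ≠ s := fun h => ((hd s hs).1 (h ▸ heA))
    rcases hp with hpA | hpB <;> rcases hr with hrA | hrB
    · exact hAC ⟨p, q, r, s, h1, h2, h3, Or.inl ⟨hpA, hrA, hq, hs⟩⟩
    · -- p ∈ A, r ∈ B
      rcases lt_trichotomy e q with he | he | he
      · exact hBC ⟨e, q, r, s, he, h2, h3, Or.inl ⟨heB, hrB, hq, hs⟩⟩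
      · exact heq he
      · rcases lt_trichotomy e s with he2 | he2 | he2
        · exact hAC ⟨p, q, e, s, h1, he, he2, Or.inl ⟨hpA, heA, hq, hs⟩⟩
        · exact hes he2
        · exact hBC ⟨q, r, s, e, h2, h3, he2, Or.inr ⟨hq, hs, hrB, heB⟩⟩
    · -- p ∈ B, r ∈ A
      rcases lt_trichotomy e q with he | he | he
      · exact hAC ⟨e, q, r, s, he, h2, h3, Or.inl ⟨heA, hrA, hq, hs⟩⟩
      · exact heq he
      · rcases lt_trichotomy e s with he2 | he2 | he2
        · exact hBC ⟨p, q, e, s, h1, he, he2, Or.inl ⟨hpB, heB, hq, hs⟩⟩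
        · exact hes he2
        · exact hAC ⟨q, r, s, e, h2, h3, he2, Or.inr ⟨hq, hs, hrA, heA⟩⟩
    · exact hBC ⟨p, q, r, s, h1, h2, h3, Or.inl ⟨hpB, hrB, hq, hs⟩⟩
  · -- q, s ∈ A ∪ B ; p, r ∈ C
    obtain ⟨hp, hr, hq, hs⟩ := h4
    rw [Finset.mem_union] at hq hs
    have hep : e ≠ p := fun h => ((hd p hp).1 (h ▸ heA))
    have her : e ≠ r := fun h => ((hd r hr).1 (h ▸ heA))
    rcases hq with hqA | hqB <;> rcases hs with hsA | hsB
    · exact hAC ⟨p, q, r, s, h1, h2, h3, Or.inr ⟨hp, hr, hqA, hsA⟩⟩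
    · -- q ∈ A, s ∈ B
      rcases lt_trichotomy e p with he | he | he
      · exact hAC ⟨e, p, q, r, he, h1, h2, Or.inl ⟨heA, hqA, hp, hr⟩⟩
      · exact hep he
      · rcases lt_trichotomy e r with he2 | he2 | he2
        · exact hBC ⟨p, e, r, s, he, he2, h3, Or.inr ⟨hp, hr, heB, hsB⟩⟩
        · exact her he2
        · exact hAC ⟨p, q, r, e, h1, h2, he2, Or.inr ⟨hp, hr, hqA, heA⟩⟩
    · -- q ∈ B, s ∈ A
      rcases lt_trichotomy e p with he | he | he
      · exact hBC ⟨e, p, q, r, he, h1, h2, Or.inl ⟨heB, hqB, hp, hr⟩⟩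
      · exact hep he
      · rcases lt_trichotomy e r with he2 | he2 | he2
        · exact hAC ⟨p, e, r, s, he, he2, h3, Or.inr ⟨hp, hr, heA, hsA⟩⟩
        · exact her he2
        · exact hBC ⟨p, q, r, e, h1, h2, he2, Or.inr ⟨hp, hr, hqB, heB⟩⟩
    · exact hBC ⟨p, q, r, s, h1, h2, h3, Or.inr ⟨hp, hr, hqB, hsB⟩⟩

end CrossSec

section ClosureSec

variable {α : Type*} [LinearOrder α] (G : Finset (Finset α))

/-- One step of the connectivity relation generated by the family `G`. -/
def Grel (i j : α) : Prop := ∃ S ∈ G, i ∈ S ∧ j ∈ S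

/-- Connectivity relation generated by `G`. -/
def Gconn (i j : α) : Prop := Relation.ReflTransGen (Grel G) i j

lemma Grel.symm' {G : Finset (Finset α)} {i j : α} (h : Grel G i j) : Grel G j i := by
  obtain ⟨S, hS, h1, h2⟩ := h; exact ⟨S, hS, h2, h1⟩

lemma Gconn.refl' {i : α} : Gconn G i i := Relation.ReflTransGen.refl

lemma Gconn.symm' {G : Finset (Finset α)} {i j : α} (h : Gconn G i j) : Gconn G j i :=
  by
  change Relation.ReflTransGen (Grel G) i j at h
  change Relation.ReflTransGen (Grel G) j i
  induction h with
  | refl => exact Relation.ReflTransGen.refl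
  | tail _ hbc ih => exact Relation.ReflTransGen.head (Grel.symm' hbc) ih

lemma Gconn.trans' {G : Finset (Finset α)} {i j k : α} (h : Gconn G i j) (h2 : Gconn G j k) :
    Gconn G i k := Relation.ReflTransGen.trans h h2

lemma gconn_of_mem {G : Finset (Finset α)} {S : Finset α} (hS : S ∈ G) {i j : α}
    (hi : i ∈ S) (hj : j ∈ S) : Gconn G i j :=
  Relation.ReflTransGen.single ⟨S, hS, hi, hj⟩

/-- The goodness hypothesis: disjoint generators do not cross. -/
def GoodFam : Prop := ∀ S ∈ G, ∀ T ∈ G, (∀ x ∈ S, x ∉ T) → ¬ Cross S T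

variable {G}

lemma exists_connector (hG : GoodFam G) {u v : α} (h : Gconn G u v) :
    ∃ K : Finset α, u ∈ K ∧ v ∈ K ∧ (∀ i ∈ K, Gconn G u i) ∧
      ∀ S ∈ G, (∀ i ∈ S, ¬ Gconn G u i) → ¬ Cross K S := by
  induction h with
  | refl =>
      exact ⟨{u}, Finset.mem_singleton_self u, Finset.mem_singleton_self u,
        fun i hi => by simp_all [Gconn.refl'],
        fun S _ _ => not_cross_singleton_left S u⟩
  | @tail w v hw hrel ih =>
      obtain ⟨K, huK, hwK, hKconn, hKcross⟩ := ih
      obtain ⟨S0, hS0, hwS0, hvS0⟩ := hrel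
      have hS0conn : ∀ i ∈ S0, Gconn G u i := fun i hi =>
        Gconn.trans' hw (gconn_of_mem hS0 hwS0 hi)
      refine ⟨K ∪ S0, Finset.mem_union_left _ huK, Finset.mem_union_right _ hvS0,
        ?_, ?_⟩
      · intro i hi
        rcases Finset.mem_union.1 hi with h | h
        · exact hKconn i h
        · exact hS0conn i h
      · intro S hSG hSnot
        have hd : ∀ c ∈ S, c ∉ K ∧ c ∉ S0 := fun c hc =>
          ⟨fun h => hSnot c hc (hKconn c h), fun h => hSnot c hc (hS0conn c h)⟩
        refine not_cross_union (hKcross S hSG hSnot) ?_ hwK hwS0 hd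
        exact hG S0 hS0 S hSG (fun x hx hxS => hSnot x hxS (hS0conn x hx))

lemma exists_connector2 (hG : GoodFam G) {p : α} {K1 : Finset α}
    (hK1conn : ∀ i ∈ K1, Gconn G p i)
    (hK1cross : ∀ S ∈ G, (∀ i ∈ S, ¬ Gconn G p i) → ¬ Cross K1 S)
    {q : α} (hpq : ¬ Gconn G p q) {v : α} (h : Gconn G q v) :
    ∃ K2 : Finset α, q ∈ K2 ∧ v ∈ K2 ∧ (∀ i ∈ K2, Gconn G q i) ∧ ¬ Cross K1 K2 := by
  induction h with
  | refl =>
      exact ⟨{q}, Finset.mem_singleton_self q, Finset.mem_singleton_self q,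
        fun i hi => by simp_all [Gconn.refl'], not_cross_singleton_right K1 q⟩
  | @tail w v hw hrel ih =>
      obtain ⟨K2, hqK2, hwK2, hK2conn, hK2cross⟩ := ih
      obtain ⟨S0, hS0, hwS0, hvS0⟩ := hrel
      have hS0conn : ∀ i ∈ S0, Gconn G q i := fun i hi =>
        Gconn.trans' hw (gconn_of_mem hS0 hwS0 hi)
      have hnotp : ∀ i, Gconn G q i → ¬ Gconn G p i := fun i hqi hpi =>
        hpq (Gconn.trans' hpi (Gconn.symm' hqi))
      refine ⟨K2 ∪ S0, Finset.mem_union_left _ hqK2, Finset.mem_union_right _ hvS0, ?_, ?_⟩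
      · intro i hi
        rcases Finset.mem_union.1 hi with h | h
        · exact hK2conn i h
        · exact hS0conn i h
      · intro hcr
        have hd : ∀ c ∈ K1, c ∉ K2 ∧ c ∉ S0 := fun c hc =>
          ⟨fun h => hnotp c (hK2conn c h) (hK1conn c hc),
           fun h => hnotp c (hS0conn c h) (hK1conn c hc)⟩
        have h1 : ¬ Cross K2 K1 := fun h => hK2cross h.symm
        have h2 : ¬ Cross S0 K1 := fun h =>
          (hK1cross S0 hS0 (fun i hi => hnotp i (hS0conn i hi))) h.symm
        exact not_cross_union h1 h2 hwK2 hwS0 hd hcr.symm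

/-- Distinct `Gconn`-classes do not cross. -/
lemma gconn_classes_noncross (hG : GoodFam G) {p q r s : α}
    (hpr : Gconn G p r) (hqs : Gconn G q s) (hpq : ¬ Gconn G p q)
    (h1 : p < q) (h2 : q < r) (h3 : r < s) : False := by
  obtain ⟨K1, hpK1, hrK1, hK1conn, hK1cross⟩ := exists_connector hG hpr
  obtain ⟨K2, hqK2, hsK2, _, hcross⟩ := exists_connector2 hG hK1conn hK1cross hpq hqs
  exact hcross ⟨p, q, r, s, h1, h2, h3, Or.inl ⟨hpK1, hrK1, hqK2, hsK2⟩⟩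

end ClosureSec

section PartitionSec

variable {α : Type*}

lemma IsPartition.mem_unique {n : ℕ} {π : Finset (Finset (Fin n))} (hπ : IsPartition π)
    {V W : Finset (Fin n)} {i : Fin n} (hV : V ∈ π) (hW : W ∈ π) (hiV : i ∈ V)
    (hiW : i ∈ W) : V = W := by
  obtain ⟨U, _, hU⟩ := hπ.2 i
  rw [hU V ⟨hV, hiV⟩, hU W ⟨hW, hiW⟩]

end PartitionSec

section ClassSec

open Classical

variable {α : Type*} [Fintype α] (E : α → α → Prop)

/-- The `E`-class of `i` as a finset. -/
noncomputable def cls (i : α) : Finset α := Finset.univ.filter (E i ·)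

variable {E}

lemma mem_cls {i j : α} : j ∈ cls E i ↔ E i j := by simp [cls]

lemma self_mem_cls (hrefl : ∀ i, E i i) {i : α} : i ∈ cls E i := mem_cls.2 (hrefl i)

lemma cls_eq_of (hsymm : ∀ a b, E a b → E b a) (htrans : ∀ a b c, E a b → E b c → E a c)
    {i j : α} (h : E i j) : cls E i = cls E j := by
  ext k; simp only [mem_cls]
  exact ⟨fun h2 => htrans _ _ _ (hsymm _ _ h) h2, fun h2 => htrans _ _ _ h h2⟩

end ClassSec

section RestrictSec

lemma restrict_apply {β : Type*} {n : ℕ} (a : Fin n → β) (V : Finset (Fin n))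
    (i : Fin V.card) : restrict a V i = a (V.orderEmbOfFin rfl i) := rfl

lemma kappa_cast {A R : Type*} (κ : ∀ n : ℕ, (Fin n → A) → R) {m m' : ℕ} (h : m = m')
    (f : Fin m → A) : κ m f = κ m' (fun i => f (Fin.cast h.symm i)) := by
  subst h; rfl

lemma orderEmbOfFin_image {s t : ℕ} (f : Fin s → Fin t) (hf : StrictMono f)
    (W : Finset (Fin s)) (h : (W.image f).card = W.card) (k : Fin (W.image f).card) :
    (W.image f).orderEmbOfFin rfl k = f (W.orderEmbOfFin rfl (Fin.cast h k)) := by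
  have key : (fun k : Fin (W.image f).card => f (W.orderEmbOfFin rfl (Fin.cast h k)))
      = ⇑((W.image f).orderEmbOfFin rfl) := by
    apply Finset.orderEmbOfFin_unique
    · intro x
      exact Finset.mem_image_of_mem f (Finset.orderEmbOfFin_mem _ _ _)
    · intro i j hij
      exact hf (((W.orderEmbOfFin rfl).strictMono) (by simpa using hij))
  exact (congrFun key k).symm

lemma restrict_image {s t : ℕ} {A : Type*} (x : Fin t → A) (f : Fin s → Fin t)
    (hf : StrictMono f) (W : Finset (Fin s)) (h : (W.image f).card = W.card)
    (k : Fin (W.image f).card) :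
    restrict x (W.image f) k = restrict (x ∘ f) W (Fin.cast h k) := by
  simp only [restrict_apply, Function.comp]
  rw [orderEmbOfFin_image f hf W h]

/-- The rank lemma: the `k`-th element of `S` has exactly `k` smaller elements in `S`. -/
lemma card_filter_lt_orderEmbOfFin {N : ℕ} (S : Finset (Fin N)) (k : Fin S.card) :
    (S.filter (fun z => z < S.orderEmbOfFin rfl k)).card = (k : ℕ) := by
  classical
  have himg : S.filter (fun z => z < S.orderEmbOfFin rfl k)
      = (Finset.univ.filter (fun k' : Fin S.card => k' < k)).image (S.orderEmbOfFin rfl) := by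
    ext z
    simp only [Finset.mem_filter, Finset.mem_image, Finset.mem_univ, true_and]
    constructor
    · rintro ⟨hzS, hzlt⟩
      have : z ∈ Set.range ⇑(S.orderEmbOfFin rfl) := by
        rw [Finset.range_orderEmbOfFin]; exact hzS
      obtain ⟨k', hk'⟩ := this
      refine ⟨k', ?_, hk'⟩
      have := hk' ▸ hzlt
      exact (OrderEmbedding.lt_iff_lt _).1 this
    · rintro ⟨k', hk'lt, rfl⟩
      exact ⟨Finset.orderEmbOfFin_mem _ _ _, (OrderEmbedding.lt_iff_lt _).2 hk'lt⟩
  rw [himg, Finset.card_image_of_injective _ (S.orderEmbOfFin rfl).injective]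
  rw [show (Finset.univ.filter (fun k' : Fin S.card => k' < k)) = Finset.Iio k by ext; simp]
  exact Fin.card_Iio k

lemma orderEmbOfFin_rank {N : ℕ} (S : Finset (Fin N)) {z : Fin N} (hz : z ∈ S) :
    ∃ k : Fin S.card, S.orderEmbOfFin rfl k = z ∧
      (k : ℕ) = (S.filter (fun w => w < z)).card := by
  have : z ∈ Set.range ⇑(S.orderEmbOfFin rfl) := by
    rw [Finset.range_orderEmbOfFin]; exact hz
  obtain ⟨k, hk⟩ := this
  exact ⟨k, hk, by rw [← hk, card_filter_lt_orderEmbOfFin]⟩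

end RestrictSec

section ClassPartSec

open Classical

variable {α : Type*} [Fintype α] {E : α → α → Prop}

lemma clsPart_isPartition' {N : ℕ} {E : Fin N → Fin N → Prop} (hrefl : ∀ i, E i i)
    (hsymm : ∀ a b, E a b → E b a) (htrans : ∀ a b c, E a b → E b c → E a c) :
    IsPartition (Finset.image (cls E) Finset.univ) := by
  constructor
  · intro V hV
    obtain ⟨i, _, rfl⟩ := Finset.mem_image.1 hV
    exact ⟨i, self_mem_cls hrefl⟩
  · intro i
    refine ⟨cls E i, ⟨Finset.mem_image.2 ⟨i, Finset.mem_univ _, rfl⟩, self_mem_cls hrefl⟩, ?_⟩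
    rintro W ⟨hW, hiW⟩
    obtain ⟨u, _, rfl⟩ := Finset.mem_image.1 hW
    exact cls_eq_of hsymm htrans (mem_cls.mp hiW : E u i)

end ClassPartSec

section GconnMono

variable {α : Type*} [LinearOrder α]

lemma gconn_mono {G G' : Finset (Finset α)} (h : G ⊆ G') {i j : α} (hij : Gconn G i j) :
    Gconn G' i j := by
  induction hij with
  | refl => exact Gconn.refl' _
  | tail _ hrel ih =>
      obtain ⟨S, hS, h1, h2⟩ := hrel
      exact Gconn.trans' ih (gconn_of_mem (h hS) h1 h2)

end GconnMono

section ConvexSec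

variable {α : Type*} [LinearOrder α]

/-- A convex finset does not cross any finset disjoint from it. -/
lemma not_cross_of_convex {S T : Finset α}
    (hT : ∀ a ∈ T, ∀ b ∈ T, ∀ c, a ≤ c → c ≤ b → c ∈ T)
    (hd : ∀ x ∈ S, x ∉ T) : ¬ Cross S T := by
  rintro ⟨p, q, r, s, h1, h2, h3, h | h⟩
  · obtain ⟨hp, hr, hq, hs⟩ := h
    exact hd r hr (hT q hq s hs r h2.le h3.le)
  · obtain ⟨hp, hr, hq, hs⟩ := h
    exact hd q hq (hT p hp r hr q h1.le h2.le)

end ConvexSec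

section IntervalSec

variable {s n : ℕ} {sfun : Fin n → ℕ}

/-- Lower endpoint of the `j`-th interval. -/
def lo (sfun : Fin n → ℕ) (j : Fin n) : ℕ :=
  if (j : ℕ) = 0 then 0 else sfun ⟨(j : ℕ) - 1, by have := j.isLt; omega⟩

lemma mem_intervalBlock {j : Fin n} {m : Fin s} :
    m ∈ intervalBlock (s := s) sfun j ↔ lo sfun j ≤ (m : ℕ) ∧ (m : ℕ) < sfun j := by
  simp [intervalBlock, lo]

lemma intervalBlock_convex {j : Fin n} {a b : Fin s} (ha : a ∈ intervalBlock (s := s) sfun j)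
    (hb : b ∈ intervalBlock (s := s) sfun j) {c : Fin s} (hac : a ≤ c) (hcb : c ≤ b) :
    c ∈ intervalBlock (s := s) sfun j := by
  rw [mem_intervalBlock] at *
  have h1 : (a : ℕ) ≤ c := hac
  have h2 : (c : ℕ) ≤ b := hcb
  omega

lemma mem_intervalPartition_iff {V : Finset (Fin s)} :
    V ∈ intervalPartition sfun s ↔ ∃ j : Fin n, V = intervalBlock (s := s) sfun j := by
  simp only [intervalPartition, Finset.mem_image, Finset.mem_univ, true_and]
  exact ⟨fun ⟨j, h⟩ => ⟨j, h.symm⟩, fun ⟨j, h⟩ => ⟨j, h.symm⟩⟩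

variable (hmono : StrictMono sfun)
include hmono

lemma sfun_le_sfun {j j' : Fin n} (h : (j : ℕ) ≤ (j' : ℕ)) : sfun j ≤ sfun j' :=
  hmono.monotone (by exact h)

lemma sfun_le_lo {j j' : Fin n} (h : j < j') : sfun j ≤ lo sfun j' := by
  have hlt : (j : ℕ) < (j' : ℕ) := h
  unfold lo
  have hj' : (j' : ℕ) ≠ 0 := by omega
  rw [if_neg hj']
  exact sfun_le_sfun hmono (by show (j:ℕ) ≤ (j':ℕ) - 1; omega)

lemma interval_mono {j j' : Fin n} (h : j < j') {p q : Fin s}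
    (hp : p ∈ intervalBlock (s := s) sfun j) (hq : q ∈ intervalBlock (s := s) sfun j') :
    p < q := by
  rw [mem_intervalBlock] at hp hq
  have := sfun_le_lo hmono h
  exact Fin.lt_def.2 (by omega)

lemma interval_disjoint {j j' : Fin n} (h : j ≠ j') {m : Fin s}
    (hm : m ∈ intervalBlock (s := s) sfun j) (hm' : m ∈ intervalBlock (s := s) sfun j') :
    False := by
  rcases lt_or_gt_of_ne h with h | h
  · exact lt_irrefl m (interval_mono hmono h hm hm')
  · exact lt_irrefl m (interval_mono hmono h hm' hm)

variable (hn : 1 ≤ n) (h1 : 1 ≤ sfun ⟨0, hn⟩) (hlast : sfun ⟨n - 1, Nat.sub_lt hn Nat.one_pos⟩ = s)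
include hn h1 hlast

lemma sfun_le (j : Fin n) : sfun j ≤ s := by
  rw [← hlast]
  exact sfun_le_sfun hmono (by show (j:ℕ) ≤ n - 1; have := j.isLt; omega)

lemma lo_lt (j : Fin n) : lo sfun j < sfun j := by
  unfold lo
  split
  · rename_i h
    calc 0 < sfun ⟨0, hn⟩ := h1
    _ ≤ sfun j := sfun_le_sfun hmono (by show 0 ≤ (j:ℕ); omega)
  · rename_i h
    exact hmono (by rw [Fin.lt_def]; show (j:ℕ) - 1 < (j:ℕ); omega)

lemma interval_nonempty (j : Fin n) : (intervalBlock (s := s) sfun j).Nonempty := by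
  refine ⟨⟨lo sfun j, lt_of_lt_of_le (lo_lt hmono hn h1 hlast j) (sfun_le hmono hn h1 hlast j)⟩, ?_⟩
  rw [mem_intervalBlock]
  exact ⟨le_refl _, lo_lt hmono hn h1 hlast j⟩

lemma exists_interval_mem (m : Fin s) : ∃ j : Fin n, m ∈ intervalBlock (s := s) sfun j := by
  classical
  have hne : (Finset.univ.filter (fun j : Fin n => (m : ℕ) < sfun j)).Nonempty := by
    refine ⟨⟨n - 1, by omega⟩, ?_⟩
    simp only [Finset.mem_filter, Finset.mem_univ, true_and]
    rw [hlast]; exact m.isLt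
  have hj0mem := (Finset.univ.filter (fun j : Fin n => (m : ℕ) < sfun j)).min'_mem hne
  set j0 := (Finset.univ.filter (fun j : Fin n => (m : ℕ) < sfun j)).min' hne with hj0
  simp only [Finset.mem_filter, Finset.mem_univ, true_and] at hj0mem
  refine ⟨j0, mem_intervalBlock.2 ⟨?_, hj0mem⟩⟩
  unfold lo
  split
  · omega
  · rename_i hne0
    by_contra hcon
    push_neg at hcon
    have : (⟨(j0 : ℕ) - 1, by have := j0.isLt; omega⟩ : Fin n) ∈
        Finset.univ.filter (fun j : Fin n => (m : ℕ) < sfun j) := by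
      simp only [Finset.mem_filter, Finset.mem_univ, true_and]; exact hcon
    have hle := Finset.min'_le _ _ this
    have h2 : (j0 : ℕ) ≤ (j0 : ℕ) - 1 := hle
    omega

/-- The index of the interval containing `m`. -/
noncomputable def idx (m : Fin s) : Fin n :=
  (exists_interval_mem hmono hn h1 hlast m).choose

lemma idx_spec (m : Fin s) : m ∈ intervalBlock (s := s) sfun (idx hmono hn h1 hlast m) :=
  (exists_interval_mem hmono hn h1 hlast m).choose_spec

lemma idx_unique {m : Fin s} {j : Fin n} (h : m ∈ intervalBlock (s := s) sfun j) :
    idx hmono hn h1 hlast m = j := by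
  by_contra hne
  exact interval_disjoint hmono hne (idx_spec hmono hn h1 hlast m) h

lemma intervalPartition_isPartition : IsPartition (intervalPartition sfun s) := by
  constructor
  · intro V hV
    obtain ⟨j, _, rfl⟩ := Finset.mem_image.1 hV
    exact interval_nonempty hmono hn h1 hlast j
  · intro m
    refine ⟨intervalBlock sfun (idx hmono hn h1 hlast m),
      ⟨Finset.mem_image.2 ⟨_, Finset.mem_univ _, rfl⟩, idx_spec hmono hn h1 hlast m⟩, ?_⟩
    rintro W ⟨hW, hmW⟩
    obtain ⟨j, _, rfl⟩ := Finset.mem_image.1 hW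
    rw [idx_unique hmono hn h1 hlast hmW]

lemma intervalPartition_isNonCrossing : IsNonCrossing (intervalPartition sfun s) := by
  intro p q r u h1' h2' h3' V hV W hW hpV hrV hqW huW
  obtain ⟨j, _, rfl⟩ := Finset.mem_image.1 hV
  obtain ⟨j', _, rfl⟩ := Finset.mem_image.1 hW
  have hqV : q ∈ intervalBlock (s := s) sfun j :=
    intervalBlock_convex hpV hrV h1'.le h2'.le
  by_contra hne
  have : j ≠ j' := fun h => hne (by rw [h])
  exact (interval_disjoint hmono this hqV hqW).elim

end IntervalSec

section GensSec

open Classical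

variable {s n : ℕ} {sfun : Fin n → ℕ}

/-- Generators: blocks of `π` together with the interval blocks. -/
noncomputable def gens (sfun : Fin n → ℕ) (s : ℕ) (π : Finset (Finset (Fin s))) :
    Finset (Finset (Fin s)) := π ∪ intervalPartition sfun s

/-- The connectivity relation on interval indices. -/
def nrel (sfun : Fin n → ℕ) (s : ℕ) (π : Finset (Finset (Fin s))) (j j' : Fin n) : Prop :=
  ∃ p q : Fin s, p ∈ intervalBlock (s := s) sfun j ∧ q ∈ intervalBlock (s := s) sfun j' ∧
    Gconn (gens sfun s π) p q

/-- The partition of interval indices induced by `π ∨ θ`. -/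
noncomputable def comp (sfun : Fin n → ℕ) (s : ℕ) (π : Finset (Finset (Fin s))) :
    Finset (Finset (Fin n)) := Finset.image (cls (nrel sfun s π)) Finset.univ

variable {π : Finset (Finset (Fin s))}

lemma interval_mem_gens (j : Fin n) : intervalBlock (s := s) sfun j ∈ gens sfun s π :=
  Finset.mem_union_right _ (Finset.mem_image.2 ⟨j, Finset.mem_univ _, rfl⟩)

lemma block_mem_gens {V : Finset (Fin s)} (h : V ∈ π) : V ∈ gens sfun s π :=
  Finset.mem_union_left _ h

lemma epi_of_same_interval {j : Fin n} {p q : Fin s} (hp : p ∈ intervalBlock (s := s) sfun j)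
    (hq : q ∈ intervalBlock (s := s) sfun j) : Gconn (gens sfun s π) p q :=
  gconn_of_mem (interval_mem_gens j) hp hq

lemma nrel_of_epi {j j' : Fin n} {p q : Fin s} (hp : p ∈ intervalBlock (s := s) sfun j)
    (hq : q ∈ intervalBlock (s := s) sfun j') (h : Gconn (gens sfun s π) p q) :
    nrel sfun s π j j' := ⟨p, q, hp, hq, h⟩

lemma epi_of_nrel {j j' : Fin n} {p q : Fin s} (hp : p ∈ intervalBlock (s := s) sfun j)
    (hq : q ∈ intervalBlock (s := s) sfun j') (h : nrel sfun s π j j') :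
    Gconn (gens sfun s π) p q := by
  obtain ⟨p', q', hp', hq', h'⟩ := h
  exact Gconn.trans' (epi_of_same_interval hp hp')
    (Gconn.trans' h' (epi_of_same_interval hq' hq))

lemma nrel_symm {j j' : Fin n} (h : nrel sfun s π j j') : nrel sfun s π j' j := by
  obtain ⟨p, q, hp, hq, h'⟩ := h
  exact ⟨q, p, hq, hp, Gconn.symm' h'⟩

lemma nrel_trans {j j' j'' : Fin n} (h : nrel sfun s π j j') (h2 : nrel sfun s π j' j'') :
    nrel sfun s π j j'' := by
  obtain ⟨p, q, hp, hq, h'⟩ := h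
  obtain ⟨p', q', hp', hq', h''⟩ := h2
  exact ⟨p, q', hp, hq', Gconn.trans' h' (Gconn.trans'
    (Gconn.trans' (epi_of_same_interval hq hp') h'') (Gconn.refl' _))⟩

/-- Goodness of the generator family. -/
lemma goodFam_gens (hmono : StrictMono sfun) (hπp : IsPartition π) (hπnc : IsNonCrossing π) :
    GoodFam (gens sfun s π) := by
  intro S hS T hT hdisj
  rcases Finset.mem_union.1 hS with hSπ | hSθ
  · rcases Finset.mem_union.1 hT with hTπ | hTθ
    · rintro ⟨p, q, r, u, hh1, hh2, hh3, h | h⟩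
      · obtain ⟨hp, hr, hq, hu⟩ := h
        exact hdisj p hp ((hπnc p q r u hh1 hh2 hh3 S hSπ T hTπ hp hr hq hu) ▸ hp)
      · obtain ⟨hp, hr, hq, hu⟩ := h
        exact hdisj q hq ((hπnc p q r u hh1 hh2 hh3 T hTπ S hSπ hp hr hq hu) ▸ hq)
    · obtain ⟨j, rfl⟩ := (mem_intervalPartition_iff).1 hTθ
      exact not_cross_of_convex (fun a ha b hb c hac hcb => intervalBlock_convex ha hb hac hcb)
        hdisj
  · obtain ⟨j, rfl⟩ := (mem_intervalPartition_iff).1 hSθ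
    intro hcr
    refine not_cross_of_convex
      (fun a ha b hb c hac hcb => intervalBlock_convex ha hb hac hcb)
      (fun x hxT hxS => hdisj x hxS hxT) hcr.symm

variable (hmono : StrictMono sfun) (hn : 1 ≤ n) (h1 : 1 ≤ sfun ⟨0, hn⟩)
  (hlast : sfun ⟨n - 1, Nat.sub_lt hn Nat.one_pos⟩ = s)

include hmono hn h1 hlast

lemma nrel_refl (j : Fin n) : nrel sfun s π j j := by
  obtain ⟨p, hp⟩ := interval_nonempty hmono hn h1 hlast j
  exact ⟨p, p, hp, hp, Gconn.refl' _⟩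

lemma comp_isPartition : IsPartition (comp sfun s π) :=
  clsPart_isPartition' (nrel_refl hmono hn h1 hlast) (fun _ _ h => nrel_symm h)
    (fun _ _ _ h h2 => nrel_trans h h2)

lemma comp_isNonCrossing (hπp : IsPartition π) (hπnc : IsNonCrossing π) :
    IsNonCrossing (comp sfun s π) := by
  intro j1 j2 j3 j4 hh1 hh2 hh3 V hV W hW h1V h3V h2W h4W
  obtain ⟨j, _, rfl⟩ := Finset.mem_image.1 hV
  obtain ⟨j', _, rfl⟩ := Finset.mem_image.1 hW
  by_contra hne
  have hsymm : ∀ a b : Fin n, nrel sfun s π a b → nrel sfun s π b a := fun _ _ h => nrel_symm h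
  have htrans : ∀ a b c : Fin n, nrel sfun s π a b → nrel sfun s π b c → nrel sfun s π a c :=
    fun _ _ _ h h2 => nrel_trans h h2
  have hj1 : nrel sfun s π j j1 := mem_cls.mp h1V
  have hj3 : nrel sfun s π j j3 := mem_cls.mp h3V
  have hj2 : nrel sfun s π j' j2 := mem_cls.mp h2W
  have hj4 : nrel sfun s π j' j4 := mem_cls.mp h4W
  have h13 : nrel sfun s π j1 j3 := htrans _ _ _ (hsymm _ _ hj1) hj3
  have h24 : nrel sfun s π j2 j4 := htrans _ _ _ (hsymm _ _ hj2) hj4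
  have h12 : ¬ nrel sfun s π j1 j2 := by
    intro h
    exact hne (by
      rw [cls_eq_of hsymm htrans hj1, cls_eq_of hsymm htrans hj2]
      exact cls_eq_of hsymm htrans h)
  -- pick representatives
  obtain ⟨p1, hp1⟩ := interval_nonempty hmono hn h1 hlast j1
  obtain ⟨p2, hp2⟩ := interval_nonempty hmono hn h1 hlast j2
  obtain ⟨p3, hp3⟩ := interval_nonempty hmono hn h1 hlast j3
  obtain ⟨p4, hp4⟩ := interval_nonempty hmono hn h1 hlast j4
  exact gconn_classes_noncross (goodFam_gens hmono hπp hπnc)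
    (epi_of_nrel hp1 hp3 h13) (epi_of_nrel hp2 hp4 h24)
    (fun h => h12 (nrel_of_epi hp1 hp2 h))
    (interval_mono hmono hh1 hp1 hp2) (interval_mono hmono hh2 hp2 hp3)
    (interval_mono hmono hh3 hp3 hp4)

lemma comp_eq_top_iff :
    comp sfun s π = {Finset.univ} ↔ ∀ i j : Fin s, Gconn (gens sfun s π) i j := by
  constructor
  · intro h i j
    have hcls : cls (nrel sfun s π) (idx hmono hn h1 hlast i) ∈ comp sfun s π :=
      Finset.mem_image.2 ⟨_, Finset.mem_univ _, rfl⟩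
    rw [h, Finset.mem_singleton] at hcls
    have : idx hmono hn h1 hlast j ∈ cls (nrel sfun s π) (idx hmono hn h1 hlast i) := by
      rw [hcls]; exact Finset.mem_univ _
    exact epi_of_nrel (idx_spec hmono hn h1 hlast i) (idx_spec hmono hn h1 hlast j)
      (mem_cls.1 this)
  · intro h
    have hcls : ∀ j : Fin n, cls (nrel sfun s π) j = Finset.univ := by
      intro j
      ext j'
      simp only [mem_cls, Finset.mem_univ, iff_true]
      obtain ⟨p, hp⟩ := interval_nonempty hmono hn h1 hlast j
      obtain ⟨q, hq⟩ := interval_nonempty hmono hn h1 hlast j'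
      exact ⟨p, q, hp, hq, h p q⟩
    ext V
    simp only [comp, Finset.mem_image, Finset.mem_univ, true_and, Finset.mem_singleton]
    constructor
    · rintro ⟨j, rfl⟩; exact hcls j
    · rintro rfl; exact ⟨⟨0, by omega⟩, hcls _⟩

/-- The filter condition of the theorem is equivalent to connectedness. -/
lemma cond_iff_total (hπ : π ∈ NC s) :
    (∀ ρ ∈ NC s, leP π ρ → leP (intervalPartition sfun s) ρ → ρ = {Finset.univ}) ↔
      ∀ i j : Fin s, Gconn (gens sfun s π) i j := by
  simp only [NC, Finset.mem_filter, Finset.mem_univ, true_and] at hπ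
  obtain ⟨hπp, hπnc⟩ := hπ
  have hs : 0 < s := by
    have := h1
    have h2 := sfun_le hmono hn h1 hlast ⟨0, hn⟩
    omega
  constructor
  · intro hcond i j
    -- use the class partition as ρ
    by_contra hij
    set E := nrel sfun s π with hE
    set ρ := Finset.image (cls (Gconn (gens sfun s π))) Finset.univ with hρ
    have hρp : IsPartition ρ :=
      clsPart_isPartition' (fun i => Gconn.refl' _) (fun _ _ h => Gconn.symm' h)
        (fun _ _ _ h h2 => Gconn.trans' h h2)
    have hρnc : IsNonCrossing ρ := by
      intro p q r u hh1 hh2 hh3 V hV W hW hpV hrV hqW huW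
      obtain ⟨a, _, rfl⟩ := Finset.mem_image.1 hV
      obtain ⟨b, _, rfl⟩ := Finset.mem_image.1 hW
      by_contra hne
      have hap : Gconn (gens sfun s π) a p := mem_cls.mp hpV
      have har : Gconn (gens sfun s π) a r := mem_cls.mp hrV
      have hbq : Gconn (gens sfun s π) b q := mem_cls.mp hqW
      have hbu : Gconn (gens sfun s π) b u := mem_cls.mp huW
      have hpr : Gconn (gens sfun s π) p r := Gconn.trans' (Gconn.symm' hap) har
      have hqu : Gconn (gens sfun s π) q u := Gconn.trans' (Gconn.symm' hbq) hbu
      have hGs : ∀ a b : Fin s, Gconn (gens sfun s π) a b → Gconn (gens sfun s π) b a :=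
        fun _ _ h => Gconn.symm' h
      have hGt : ∀ a b c : Fin s, Gconn (gens sfun s π) a b → Gconn (gens sfun s π) b c →
          Gconn (gens sfun s π) a c := fun _ _ _ h h2 => Gconn.trans' h h2
      have hpq : ¬ Gconn (gens sfun s π) p q := by
        intro h
        exact hne (by
          rw [cls_eq_of hGs hGt hap, cls_eq_of hGs hGt hbq]
          exact cls_eq_of hGs hGt h)
      exact gconn_classes_noncross (goodFam_gens hmono hπp hπnc) hpr hqu hpq hh1 hh2 hh3
    have hρNC : ρ ∈ NC s := by
      simp only [NC, Finset.mem_filter, Finset.mem_univ, true_and]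
      exact ⟨hρp, hρnc⟩
    have hle1 : leP π ρ := by
      intro V hV
      obtain ⟨v, hv⟩ := hπp.1 V hV
      refine ⟨cls (Gconn (gens sfun s π)) v, Finset.mem_image.2 ⟨v, Finset.mem_univ _, rfl⟩, ?_⟩
      intro x hx
      exact mem_cls.2 (gconn_of_mem (block_mem_gens hV) hv hx)
    have hle2 : leP (intervalPartition sfun s) ρ := by
      intro V hV
      obtain ⟨j, rfl⟩ := (mem_intervalPartition_iff).1 hV
      obtain ⟨v, hv⟩ := interval_nonempty hmono hn h1 hlast j
      refine ⟨cls (Gconn (gens sfun s π)) v, Finset.mem_image.2 ⟨v, Finset.mem_univ _, rfl⟩, ?_⟩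
      intro x hx
      exact mem_cls.2 (gconn_of_mem (interval_mem_gens j) hv hx)
    have := hcond ρ hρNC hle1 hle2
    have hclsi : cls (Gconn (gens sfun s π)) i ∈ ρ :=
      Finset.mem_image.2 ⟨i, Finset.mem_univ _, rfl⟩
    rw [this, Finset.mem_singleton] at hclsi
    exact hij (mem_cls.1 (by rw [hclsi]; exact Finset.mem_univ j))
  · intro htotal ρ hρ hle1 hle2
    simp only [NC, Finset.mem_filter, Finset.mem_univ, true_and] at hρ
    obtain ⟨hρp, hρnc⟩ := hρ
    obtain ⟨i0⟩ : Nonempty (Fin s) := ⟨⟨0, hs⟩⟩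
    obtain ⟨B, ⟨hB, hi0B⟩, hBuniq⟩ := hρp.2 i0
    have hBall : ∀ j : Fin s, j ∈ B := by
      intro j
      have hconn := htotal i0 j
      clear hBuniq
      induction hconn with
      | refl => exact hi0B
      | @tail w v hw hrel ih =>
          obtain ⟨S, hS, hwS, hvS⟩ := hrel
          have hSsub : ∃ W ∈ ρ, S ⊆ W := by
            rcases Finset.mem_union.1 hS with h | h
            · exact hle1 S h
            · exact hle2 S h
          obtain ⟨W, hW, hSW⟩ := hSsub
          have : W = B := hρp.mem_unique hW hB (hSW hwS) ih
          exact this ▸ hSW hvS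
    have hBuniv : B = Finset.univ := Finset.eq_univ_iff_forall.2 hBall
    ext W
    simp only [Finset.mem_singleton]
    constructor
    · intro hW
      obtain ⟨w, hw⟩ := hρp.1 W hW
      rw [hρp.mem_unique hW hB hw (hBall w)]
      exact hBuniv
    · rintro rfl
      rw [← hBuniv]; exact hB

end GensSec

section FiberSec

open Classical

variable {s n : ℕ} {sfun : Fin n → ℕ}

/-- Union of the intervals indexed by `B`. -/
noncomputable def SB (sfun : Fin n → ℕ) (s : ℕ) (B : Finset (Fin n)) : Finset (Fin s) :=
  B.biUnion (intervalBlock sfun)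

/-- Local generators supported on `SB B`. -/
noncomputable def gensB (sfun : Fin n → ℕ) (s : ℕ) (π : Finset (Finset (Fin s)))
    (B : Finset (Fin n)) : Finset (Finset (Fin s)) :=
  π.filter (· ⊆ SB sfun s B) ∪ B.image (intervalBlock sfun)

variable {π : Finset (Finset (Fin s))} {σ : Finset (Finset (Fin n))}

lemma mem_SB {B : Finset (Fin n)} {z : Fin s} :
    z ∈ SB sfun s B ↔ ∃ j ∈ B, z ∈ intervalBlock (s := s) sfun j := by
  simp [SB]

lemma interval_subset_SB {B : Finset (Fin n)} {j : Fin n} (h : j ∈ B) :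
    intervalBlock (s := s) sfun j ⊆ SB sfun s B := fun z hz => mem_SB.2 ⟨j, h, hz⟩

lemma gensB_subset_gens {B : Finset (Fin n)} : gensB sfun s π B ⊆ gens sfun s π := by
  intro S hS
  rcases Finset.mem_union.1 hS with h | h
  · exact Finset.mem_union_left _ (Finset.mem_of_mem_filter _ h)
  · obtain ⟨j, _, rfl⟩ := Finset.mem_image.1 h
    exact interval_mem_gens j

variable (hmono : StrictMono sfun) (hn : 1 ≤ n) (h1 : 1 ≤ sfun ⟨0, hn⟩)
  (hlast : sfun ⟨n - 1, Nat.sub_lt hn Nat.one_pos⟩ = s)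
include hmono hn h1 hlast

lemma mem_SB_idx {B : Finset (Fin n)} {z : Fin s} :
    z ∈ SB sfun s B ↔ idx hmono hn h1 hlast z ∈ B := by
  rw [mem_SB]
  constructor
  · rintro ⟨j, hj, hz⟩
    rwa [idx_unique hmono hn h1 hlast hz]
  · intro h
    exact ⟨_, h, idx_spec hmono hn h1 hlast z⟩

lemma gconn_stay (hσp : IsPartition σ)
    (hblocks : ∀ V ∈ π, ∃ B ∈ σ, V ⊆ SB sfun s B)
    {i i' : Fin s} (h : Gconn (gens sfun s π) i i') {B : Finset (Fin n)} (hB : B ∈ σ)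
    (hi : i ∈ SB sfun s B) : Gconn (gensB sfun s π B) i i' ∧ i' ∈ SB sfun s B := by
  induction h with
  | refl => exact ⟨Gconn.refl' _, hi⟩
  | @tail w v hw hrel ih =>
      obtain ⟨hGw, hwB⟩ := ih
      obtain ⟨S, hS, hwS, hvS⟩ := hrel
      have hSsub : S ⊆ SB sfun s B ∧ S ∈ gensB sfun s π B := by
        rcases Finset.mem_union.1 hS with h | h
        · obtain ⟨B', hB', hSB'⟩ := hblocks S h
          have hBB' : B = B' := by
            have h1' : idx hmono hn h1 hlast w ∈ B := (mem_SB_idx hmono hn h1 hlast).1 hwB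
            have h2' : idx hmono hn h1 hlast w ∈ B' :=
              (mem_SB_idx hmono hn h1 hlast).1 (hSB' hwS)
            exact hσp.mem_unique hB hB' h1' h2'
          rw [hBB']
          exact ⟨hSB', Finset.mem_union_left _ (Finset.mem_filter.2 ⟨h, hBB' ▸ hSB'⟩)⟩
        · obtain ⟨j, rfl⟩ := (mem_intervalPartition_iff).1 h
          have hj : j ∈ B := by
            have := idx_unique hmono hn h1 hlast hwS
            rw [← this]
            exact (mem_SB_idx hmono hn h1 hlast).1 hwB
          exact ⟨interval_subset_SB hj, Finset.mem_union_right _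
            (Finset.mem_image.2 ⟨j, hj, rfl⟩)⟩
      refine ⟨Gconn.trans' hGw (gconn_of_mem hSsub.2 hwS hvS), hSsub.1 hvS⟩

/-- Characterization of the fiber `comp π = σ`. -/
lemma comp_eq_iff (hσp : IsPartition σ) (hπp : IsPartition π) :
    comp sfun s π = σ ↔
      ((∀ V ∈ π, ∃ B ∈ σ, V ⊆ SB sfun s B) ∧
        ∀ B ∈ σ, ∀ i ∈ SB sfun s B, ∀ i' ∈ SB sfun s B, Gconn (gensB sfun s π B) i i') := by
  constructor
  · intro hcomp
    have hblocks : ∀ V ∈ π, ∃ B ∈ σ, V ⊆ SB sfun s B := by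
      intro V hV
      obtain ⟨v, hv⟩ := hπp.1 V hV
      refine ⟨cls (nrel sfun s π) (idx hmono hn h1 hlast v), ?_, ?_⟩
      · rw [← hcomp]; exact Finset.mem_image.2 ⟨_, Finset.mem_univ _, rfl⟩
      · intro x hx
        have hEpi : Gconn (gens sfun s π) v x := gconn_of_mem (block_mem_gens hV) hv hx
        have hnr : nrel sfun s π (idx hmono hn h1 hlast v) (idx hmono hn h1 hlast x) :=
          nrel_of_epi (idx_spec hmono hn h1 hlast v) (idx_spec hmono hn h1 hlast x) hEpi
        rw [mem_SB_idx hmono hn h1 hlast]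
        exact mem_cls.2 hnr
    refine ⟨hblocks, ?_⟩
    intro B hB i hi i' hi'
    have hBc := hB
    rw [← hcomp] at hBc
    obtain ⟨j0, _, hj0⟩ := Finset.mem_image.1 hBc
    have ha : nrel sfun s π j0 (idx hmono hn h1 hlast i) := by
      have := (mem_SB_idx hmono hn h1 hlast).1 hi
      rw [← hj0] at this
      exact mem_cls.1 this
    have hb : nrel sfun s π j0 (idx hmono hn h1 hlast i') := by
      have := (mem_SB_idx hmono hn h1 hlast).1 hi'
      rw [← hj0] at this
      exact mem_cls.1 this
    have hEpi : Gconn (gens sfun s π) i i' :=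
      epi_of_nrel (idx_spec hmono hn h1 hlast i) (idx_spec hmono hn h1 hlast i')
        (nrel_trans (nrel_symm ha) hb)
    exact (gconn_stay hmono hn h1 hlast hσp hblocks hEpi hB hi).1
  · rintro ⟨hblocks, hconn⟩
    have hkey : ∀ j j' : Fin n, nrel sfun s π j j' ↔ ∃ B ∈ σ, j ∈ B ∧ j' ∈ B := by
      intro j j'
      constructor
      · rintro ⟨p, q, hp, hq, hG⟩
        obtain ⟨B, ⟨hB, hjB⟩, _⟩ := hσp.2 j
        have hpSB : p ∈ SB sfun s B := interval_subset_SB hjB hp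
        have hq' := (gconn_stay hmono hn h1 hlast hσp hblocks hG hB hpSB).2
        have hj' : idx hmono hn h1 hlast q ∈ B := (mem_SB_idx hmono hn h1 hlast).1 hq'
        rw [idx_unique hmono hn h1 hlast hq] at hj'
        exact ⟨B, hB, hjB, hj'⟩
      · rintro ⟨B, hB, hjB, hj'B⟩
        obtain ⟨p, hp⟩ := interval_nonempty hmono hn h1 hlast j
        obtain ⟨q, hq⟩ := interval_nonempty hmono hn h1 hlast j'
        exact ⟨p, q, hp, hq, gconn_mono gensB_subset_gens
          (hconn B hB p (interval_subset_SB hjB hp) q (interval_subset_SB hj'B hq))⟩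
    ext V
    simp only [comp, Finset.mem_image, Finset.mem_univ, true_and]
    constructor
    · rintro ⟨j, rfl⟩
      obtain ⟨B, ⟨hB, hjB⟩, hBu⟩ := hσp.2 j
      have hclsB : cls (nrel sfun s π) j = B := by
        ext j'
        rw [mem_cls, hkey]
        constructor
        · rintro ⟨B', hB', hjB', hj'B'⟩
          rwa [hBu B' ⟨hB', hjB'⟩] at hj'B'
        · intro h; exact ⟨B, hB, hjB, h⟩
      rw [hclsB]; exact hB
    · intro hV
      obtain ⟨v, hv⟩ := hσp.1 V hV
      refine ⟨v, ?_⟩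
      ext j'
      rw [mem_cls, hkey]
      constructor
      · rintro ⟨B', hB', hvB', hj'B'⟩
        rwa [hσp.mem_unique hB' hV hvB' hv] at hj'B'
      · intro h; exact ⟨V, hV, hv, h⟩

end FiberSec

section CountSec

variable {N : ℕ}

lemma count_mono (S : Finset (Fin N)) {c c' : ℕ} (h : c ≤ c') :
    (S.filter (fun w : Fin N => (w : ℕ) < c)).card ≤ (S.filter (fun w : Fin N => (w : ℕ) < c')).card := by
  apply Finset.card_le_card
  intro w hw
  simp only [Finset.mem_filter] at *
  exact ⟨hw.1, lt_of_lt_of_le hw.2 h⟩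

lemma rank_lt_count {S : Finset (Fin N)} {z : Fin N} (hz : z ∈ S) {c : ℕ} :
    (S.filter (fun w : Fin N => (w : ℕ) < (z : ℕ))).card < (S.filter (fun w : Fin N => (w : ℕ) < c)).card ↔
      (z : ℕ) < c := by
  constructor
  · intro h
    by_contra hc
    push_neg at hc
    exact absurd (count_mono S hc) (by omega)
  · intro h
    apply Finset.card_lt_card
    constructor
    · intro w hw
      simp only [Finset.mem_filter] at *
      exact ⟨hw.1, lt_trans hw.2 h⟩
    · intro hsub
      have : z ∈ S.filter (fun w : Fin N => (w : ℕ) < c) := Finset.mem_filter.2 ⟨hz, h⟩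
      have := hsub this
      simp only [Finset.mem_filter] at this
      omega
  

lemma count_le_rank {S : Finset (Fin N)} {z : Fin N} (hz : z ∈ S) {c : ℕ} :
    (S.filter (fun w : Fin N => (w : ℕ) < c)).card ≤ (S.filter (fun w : Fin N => (w : ℕ) < (z : ℕ))).card ↔
      c ≤ (z : ℕ) := by
  rw [← not_lt, ← not_lt, not_iff_not]
  exact rank_lt_count hz

lemma card_filter_lt_orderEmbOfFin' (S : Finset (Fin N)) (k : Fin S.card) :
    (S.filter (fun z : Fin N => (z : ℕ) < ((S.orderEmbOfFin rfl k : Fin N) : ℕ))).card = (k : ℕ) := by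
  rw [← card_filter_lt_orderEmbOfFin S k]
  congr 1

end CountSec

section SubDataSec

open Classical

variable {s n : ℕ} {sfun : Fin n → ℕ}

/-- The boundary data of the sub-problem attached to a block `B`. -/
noncomputable def subSfun (sfun : Fin n → ℕ) (s : ℕ) (B : Finset (Fin n)) :
    Fin B.card → ℕ :=
  fun i => ((SB sfun s B).filter (fun z : Fin s => (z : ℕ) < sfun (B.orderEmbOfFin rfl i))).card

variable {B : Finset (Fin n)}

lemma embB_mem (i : Fin B.card) : B.orderEmbOfFin rfl i ∈ B := Finset.orderEmbOfFin_mem _ _ _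

lemma mem_B_iff {j : Fin n} : j ∈ B ↔ ∃ l : Fin B.card, B.orderEmbOfFin rfl l = j := by
  constructor
  · intro hj
    have : j ∈ Set.range ⇑(B.orderEmbOfFin rfl) := by
      rw [Finset.range_orderEmbOfFin]; exact hj
    exact this
  · rintro ⟨l, rfl⟩; exact embB_mem l

lemma embB_zero_le {j : Fin n} (hj : j ∈ B) (i : Fin B.card) (hi : (i : ℕ) = 0) :
    B.orderEmbOfFin rfl i ≤ j := by
  obtain ⟨l, rfl⟩ := mem_B_iff.1 hj
  exact (B.orderEmbOfFin rfl).monotone (by rw [Fin.le_def, hi]; omega)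

lemma embB_gap {i : Fin B.card} (hi : (i : ℕ) ≠ 0) {j : Fin n} (hj : j ∈ B)
    (h : B.orderEmbOfFin rfl ⟨(i : ℕ) - 1, by have := i.isLt; omega⟩ < j) :
    B.orderEmbOfFin rfl i ≤ j := by
  obtain ⟨l, rfl⟩ := mem_B_iff.1 hj
  have hl : (⟨(i : ℕ) - 1, by have := i.isLt; omega⟩ : Fin B.card) < l :=
    (B.orderEmbOfFin rfl).lt_iff_lt.1 h
  apply (B.orderEmbOfFin rfl).monotone
  rw [Fin.le_def]
  have : (i : ℕ) - 1 < (l : ℕ) := hl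
  omega

lemma card_B_pos (hBne : B.Nonempty) : 1 ≤ B.card := Finset.card_pos.2 hBne

variable (hmono : StrictMono sfun) (hn : 1 ≤ n) (h1 : 1 ≤ sfun ⟨0, hn⟩)
  (hlast : sfun ⟨n - 1, Nat.sub_lt hn Nat.one_pos⟩ = s)
include hmono

lemma lo_mono {j j' : Fin n} (h : j ≤ j') : lo sfun j ≤ lo sfun j' := by
  unfold lo
  have hle : (j : ℕ) ≤ (j' : ℕ) := h
  split
  · split
    · omega
    · exact Nat.zero_le _
  · rename_i hj
    have hj' : (j' : ℕ) ≠ 0 := by omega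
    rw [if_neg hj']
    exact sfun_le_sfun hmono (by show (j:ℕ) - 1 ≤ (j':ℕ) - 1; omega)

include hn h1 hlast

lemma lo_le_of_mem_SB {z : Fin s} (hz : z ∈ SB sfun s B) {j : Fin n}
    (hj : j ≤ idx hmono hn h1 hlast z) : lo sfun j ≤ (z : ℕ) :=
  le_trans (lo_mono hmono hj)
    ((mem_intervalBlock.1 (idx_spec hmono hn h1 hlast z)).1)

/-- The window characterization. -/
lemma subSfun_window {z : Fin s} (hz : z ∈ SB sfun s B) (i : Fin B.card) :
    (lo (subSfun sfun s B) i ≤ ((SB sfun s B).filter (fun w : Fin s => (w : ℕ) < (z : ℕ))).card ∧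
      ((SB sfun s B).filter (fun w : Fin s => (w : ℕ) < (z : ℕ))).card < subSfun sfun s B i) ↔
      z ∈ intervalBlock (s := s) sfun (B.orderEmbOfFin rfl i) := by
  rw [mem_intervalBlock]
  have hpart1 : ((SB sfun s B).filter (fun w : Fin s => (w : ℕ) < (z : ℕ))).card <
      subSfun sfun s B i ↔ (z : ℕ) < sfun (B.orderEmbOfFin rfl i) := rank_lt_count hz
  have hidxB : idx hmono hn h1 hlast z ∈ B := (mem_SB_idx hmono hn h1 hlast).1 hz
  have hpart2 : lo (subSfun sfun s B) i ≤
      ((SB sfun s B).filter (fun w : Fin s => (w : ℕ) < (z : ℕ))).card ↔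
      lo sfun (B.orderEmbOfFin rfl i) ≤ (z : ℕ) := by
    unfold lo
    by_cases hi : (i : ℕ) = 0
    · rw [if_pos hi]
      have hB0 : ((B.orderEmbOfFin rfl i : Fin n) : ℕ) = 0 ∨
          ((B.orderEmbOfFin rfl i : Fin n) : ℕ) ≠ 0 := em' _ |>.symm.imp id id
      constructor
      · intro _
        split
        · omega
        · -- lo sfun (embB i) ≤ z since embB i ≤ idx z
          rename_i hne0
          have h := lo_le_of_mem_SB hmono hn h1 hlast hz
            (embB_zero_le hidxB i hi)
          unfold lo at h
          rwa [if_neg hne0] at h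
      · intro _; exact Nat.zero_le _
    · rw [if_neg hi]
      have hlt : B.orderEmbOfFin rfl ⟨(i : ℕ) - 1, by have := i.isLt; omega⟩ <
          B.orderEmbOfFin rfl i :=
        (B.orderEmbOfFin rfl).strictMono (by rw [Fin.lt_def]; show (i:ℕ)-1 < (i:ℕ); omega)
      have hne0 : ((B.orderEmbOfFin rfl i : Fin n) : ℕ) ≠ 0 := by
        have : ((B.orderEmbOfFin rfl ⟨(i : ℕ) - 1, by have := i.isLt; omega⟩ : Fin n) : ℕ) <
          ((B.orderEmbOfFin rfl i : Fin n) : ℕ) := hlt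
        omega
      rw [if_neg hne0]
      have hcl : subSfun sfun s B ⟨(i : ℕ) - 1, by have := i.isLt; omega⟩ ≤
          ((SB sfun s B).filter (fun w : Fin s => (w : ℕ) < (z : ℕ))).card ↔
          sfun (B.orderEmbOfFin rfl ⟨(i : ℕ) - 1, by have := i.isLt; omega⟩) ≤ (z : ℕ) :=
        count_le_rank hz
      rw [hcl]
      constructor
      · intro h
        -- sfun (embB (i-1)) ≤ z implies embB (i-1) < idx z, hence embB i ≤ idx z
        have hlt2 : B.orderEmbOfFin rfl ⟨(i : ℕ) - 1, by have := i.isLt; omega⟩ <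
            idx hmono hn h1 hlast z := by
          by_contra hnot
          push_neg at hnot
          have := sfun_le_sfun hmono (Fin.le_def.1 hnot)
          have hzlt := (mem_intervalBlock.1 (idx_spec hmono hn h1 hlast z)).2
          omega
        have hle := embB_gap hi hidxB hlt2
        have hv := lo_le_of_mem_SB hmono hn h1 hlast hz hle
        unfold lo at hv
        rwa [if_neg hne0] at hv
      · intro h
        -- lo sfun (embB i) ≤ z; embB (i-1) ≤ embB i - 1 so sfun (embB (i-1)) ≤ lo (embB i)
        calc sfun (B.orderEmbOfFin rfl ⟨(i : ℕ) - 1, by have := i.isLt; omega⟩)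
            ≤ sfun ⟨((B.orderEmbOfFin rfl i : Fin n) : ℕ) - 1, by
                have := (B.orderEmbOfFin rfl i).isLt; omega⟩ := by
              apply sfun_le_sfun hmono
              show ((B.orderEmbOfFin rfl ⟨(i : ℕ) - 1, _⟩ : Fin n) : ℕ) ≤
                ((B.orderEmbOfFin rfl i : Fin n) : ℕ) - 1
              have : ((B.orderEmbOfFin rfl ⟨(i : ℕ) - 1, by have := i.isLt; omega⟩ : Fin n) : ℕ)
                  < ((B.orderEmbOfFin rfl i : Fin n) : ℕ) :=
                (B.orderEmbOfFin rfl).strictMono (by rw [Fin.lt_def]; show (i:ℕ)-1 < (i:ℕ); omega)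
              omega
          _ ≤ (z : ℕ) := h
  omega

lemma push_interval (i : Fin B.card) :
    (intervalBlock (s := (SB sfun s B).card) (subSfun sfun s B) i).image
      ((SB sfun s B).orderEmbOfFin rfl) = intervalBlock (s := s) sfun (B.orderEmbOfFin rfl i) := by
  ext z
  constructor
  · intro hz
    obtain ⟨k, hk, rfl⟩ := Finset.mem_image.1 hz
    rw [mem_intervalBlock] at hk
    have hmem : (SB sfun s B).orderEmbOfFin rfl k ∈ SB sfun s B :=
      Finset.orderEmbOfFin_mem _ _ _
    rw [← subSfun_window hmono hn h1 hlast hmem i]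
    rw [card_filter_lt_orderEmbOfFin']
    exact hk
  · intro hz
    have hzS : z ∈ SB sfun s B := interval_subset_SB (embB_mem i) hz
    obtain ⟨k, hfk, hkrank⟩ := orderEmbOfFin_rank (SB sfun s B) hzS
    refine Finset.mem_image.2 ⟨k, ?_, hfk⟩
    rw [mem_intervalBlock]
    have hw := (subSfun_window hmono hn h1 hlast hzS i).2 hz
    have : ((SB sfun s B).filter (fun w : Fin s => (w : ℕ) < (z : ℕ))).card = (k : ℕ) := by
      rw [hkrank]
      congr 1
    rw [this] at hw
    exact hw

lemma SB_nonempty (hBne : B.Nonempty) : (SB sfun s B).Nonempty := by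
  obtain ⟨j, hj⟩ := hBne
  obtain ⟨z, hz⟩ := interval_nonempty hmono hn h1 hlast j
  exact ⟨z, interval_subset_SB hj hz⟩

lemma subSfun_strictMono : StrictMono (subSfun sfun s B) := by
  intro i i' hii
  have hii' : (i : ℕ) < (i' : ℕ) := hii
  -- pick z in the interval of embB i'
  obtain ⟨z, hz⟩ := interval_nonempty hmono hn h1 hlast (B.orderEmbOfFin rfl i')
  have hzS : z ∈ SB sfun s B := interval_subset_SB (embB_mem i') hz
  have hw := (subSfun_window hmono hn h1 hlast hzS i').2 hz
  have hmono' : subSfun sfun s B i ≤ lo (subSfun sfun s B) i' := by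
    unfold lo
    rw [if_neg (by omega : ¬ (i' : ℕ) = 0)]
    show subSfun sfun s B i ≤ subSfun sfun s B ⟨(i' : ℕ) - 1, _⟩
    apply count_mono
    apply sfun_le_sfun hmono
    show ((B.orderEmbOfFin rfl i : Fin n) : ℕ) ≤
      ((B.orderEmbOfFin rfl ⟨(i' : ℕ) - 1, by have := i'.isLt; omega⟩ : Fin n) : ℕ)
    exact (B.orderEmbOfFin rfl).monotone (by rw [Fin.le_def]; show (i:ℕ) ≤ (i':ℕ)-1; omega)
  omega

lemma subSfun_first (hBne : B.Nonempty) :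
    1 ≤ subSfun sfun s B ⟨0, card_B_pos hBne⟩ := by
  obtain ⟨z, hz⟩ := interval_nonempty hmono hn h1 hlast
    (B.orderEmbOfFin rfl ⟨0, card_B_pos hBne⟩)
  have hzS : z ∈ SB sfun s B := interval_subset_SB (embB_mem _) hz
  have hzlt := (mem_intervalBlock.1 hz).2
  have : z ∈ (SB sfun s B).filter (fun w : Fin s => (w : ℕ) <
      sfun (B.orderEmbOfFin rfl ⟨0, card_B_pos hBne⟩)) := Finset.mem_filter.2 ⟨hzS, hzlt⟩
  exact Finset.card_pos.2 ⟨z, this⟩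

lemma subSfun_last (hBne : B.Nonempty) :
    subSfun sfun s B ⟨B.card - 1, by have := card_B_pos hBne; omega⟩ = (SB sfun s B).card := by
  unfold subSfun
  rw [Finset.filter_true_of_mem]
  intro z hz
  have hidxB : idx hmono hn h1 hlast z ∈ B := (mem_SB_idx hmono hn h1 hlast).1 hz
  obtain ⟨l, hl⟩ := mem_B_iff.1 hidxB
  have hle : idx hmono hn h1 hlast z ≤
      B.orderEmbOfFin rfl ⟨B.card - 1, by have := card_B_pos hBne; omega⟩ := by
    rw [← hl]
    exact (B.orderEmbOfFin rfl).monotone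
      (by rw [Fin.le_def]; show (l:ℕ) ≤ B.card - 1; have := l.isLt; omega)
  have hzlt := (mem_intervalBlock.1 (idx_spec hmono hn h1 hlast z)).2
  have := sfun_le_sfun hmono (Fin.le_def.1 hle)
  omega

end SubDataSec

section TransportSec

open Classical

lemma gconn_image {t N : ℕ} {f : Fin t → Fin N} (hf : Function.Injective f)
    {G1 : Finset (Finset (Fin t))} {k k' : Fin t} :
    Gconn G1 k k' ↔ Gconn (G1.image (Finset.image f)) (f k) (f k') := by
  constructor
  · intro h
    induction h with
    | refl => exact Gconn.refl' _
    | @tail w v hw hrel ih =>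
        obtain ⟨S, hS, hh1, hh2⟩ := hrel
        exact Gconn.trans' ih (gconn_of_mem (Finset.mem_image_of_mem _ hS)
          (Finset.mem_image_of_mem f hh1) (Finset.mem_image_of_mem f hh2))
  · intro h
    have key : ∀ j, Gconn (G1.image (Finset.image f)) (f k) j →
        ∃ k'' : Fin t, f k'' = j ∧ Gconn G1 k k'' := by
      intro j hj
      induction hj with
      | refl => exact ⟨k, rfl, Gconn.refl' _⟩
      | @tail w v hw hrel ih =>
          obtain ⟨kw, hkw, hG⟩ := ih
          obtain ⟨S2, hS2, hwS2, hvS2⟩ := hrel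
          obtain ⟨S1, hS1, rfl⟩ := Finset.mem_image.1 hS2
          obtain ⟨kw', hkw', hfkw'⟩ := Finset.mem_image.1 hwS2
          have hkwe : kw' = kw := hf (by rw [hfkw', hkw])
          obtain ⟨kv, hkv, hfkv⟩ := Finset.mem_image.1 hvS2
          exact ⟨kv, hfkv, Gconn.trans' hG (gconn_of_mem hS1 (hkwe ▸ hkw') hkv)⟩
    obtain ⟨k'', hfk'', hG⟩ := key _ h
    rwa [hf hfk''] at hG

/-- Pull back a subset of `Fin N` along the enumeration of `S`. -/
noncomputable def pull {N : ℕ} (S : Finset (Fin N)) (V : Finset (Fin N)) :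
    Finset (Fin S.card) :=
  Finset.univ.filter (fun k => (S.orderEmbOfFin rfl k : Fin N) ∈ V)

lemma mem_pull {N : ℕ} {S V : Finset (Fin N)} {k : Fin S.card} :
    k ∈ pull S V ↔ (S.orderEmbOfFin rfl k : Fin N) ∈ V := by simp [pull]

lemma image_pull {N : ℕ} {S V : Finset (Fin N)} (hVS : V ⊆ S) :
    (pull S V).image ⇑(S.orderEmbOfFin rfl) = V := by
  ext z
  simp only [Finset.mem_image]
  constructor
  · rintro ⟨k, hk, rfl⟩
    exact mem_pull.1 hk
  · intro hz
    have : z ∈ Set.range ⇑(S.orderEmbOfFin rfl) := by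
      rw [Finset.range_orderEmbOfFin]; exact hVS hz
    obtain ⟨k, rfl⟩ := this
    exact ⟨k, mem_pull.2 hz, rfl⟩

lemma pull_image {N : ℕ} {S : Finset (Fin N)} (W : Finset (Fin S.card)) :
    pull S (W.image ⇑(S.orderEmbOfFin rfl)) = W := by
  ext k
  simp only [mem_pull, Finset.mem_image]
  constructor
  · rintro ⟨k', hk', he⟩
    rwa [(S.orderEmbOfFin rfl).injective he] at hk'
  · intro h; exact ⟨k, h, rfl⟩

end TransportSec

section ConnBSec

open Classical

variable {s n : ℕ} {sfun : Fin n → ℕ} {B : Finset (Fin n)}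

/-- The set of non-crossing partitions of `SB B` that are connected with the
intervals of `B`. -/
noncomputable def ConnB (sfun : Fin n → ℕ) (s : ℕ) (B : Finset (Fin n)) :
    Finset (Finset (Finset (Fin s))) :=
  ((NC (SB sfun s B).card).filter
      (fun τ => comp (subSfun sfun s B) (SB sfun s B).card τ = {Finset.univ})).image
    (Finset.image (Finset.image ⇑((SB sfun s B).orderEmbOfFin rfl)))

variable (hmono : StrictMono sfun) (hn : 1 ≤ n) (h1 : 1 ≤ sfun ⟨0, hn⟩)
  (hlast : sfun ⟨n - 1, Nat.sub_lt hn Nat.one_pos⟩ = s) (hBne : B.Nonempty)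
include hmono hn h1 hlast hBne

lemma gens_image_eq {π' : Finset (Finset (Fin s))} (hsub : ∀ V ∈ π', V ⊆ SB sfun s B)
    {τ : Finset (Finset (Fin (SB sfun s B).card))}
    (hτ : τ.image (Finset.image ⇑((SB sfun s B).orderEmbOfFin rfl)) = π') :
    (gens (subSfun sfun s B) (SB sfun s B).card τ).image
        (Finset.image ⇑((SB sfun s B).orderEmbOfFin rfl)) = gensB sfun s π' B := by
  rw [gens, Finset.image_union, hτ, gensB]
  congr 1
  · rw [Finset.filter_true_of_mem hsub]
  · rw [intervalPartition]
    rw [Finset.image_image]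
    have : ∀ i : Fin B.card,
        (Finset.image ⇑((SB sfun s B).orderEmbOfFin rfl) ∘ intervalBlock (subSfun sfun s B)) i
          = intervalBlock sfun (B.orderEmbOfFin rfl i) := by
      intro i
      exact push_interval hmono hn h1 hlast i
    rw [Finset.image_congr (fun i _ => this i)]
    have hBimg : Finset.image ⇑(B.orderEmbOfFin rfl) Finset.univ = B := by
      ext j
      simp only [Finset.mem_image, Finset.mem_univ, true_and]
      rw [mem_B_iff]
    conv_rhs => rw [← hBimg]
    rw [Finset.image_image]
    exact Finset.image_congr (fun i _ => rfl)

lemma mem_ConnB_iff {π' : Finset (Finset (Fin s))} :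
    π' ∈ ConnB sfun s B ↔
      ((∀ V ∈ π', V.Nonempty ∧ V ⊆ SB sfun s B) ∧
        (∀ z ∈ SB sfun s B, ∃! V, V ∈ π' ∧ z ∈ V) ∧
        IsNonCrossing π' ∧
        (∀ i ∈ SB sfun s B, ∀ i' ∈ SB sfun s B, Gconn (gensB sfun s π' B) i i')) := by
  have htpos : 0 < (SB sfun s B).card :=
    Finset.card_pos.2 (SB_nonempty hmono hn h1 hlast hBne)
  have hmpos : 1 ≤ B.card := card_B_pos hBne
  have hsubmono : StrictMono (subSfun sfun s B) := subSfun_strictMono hmono hn h1 hlast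
  have hsubfirst : 1 ≤ subSfun sfun s B ⟨0, hmpos⟩ := subSfun_first hmono hn h1 hlast hBne
  have hsublast : subSfun sfun s B ⟨B.card - 1, by omega⟩ = (SB sfun s B).card :=
    subSfun_last hmono hn h1 hlast hBne
  constructor
  · intro hπ'
    obtain ⟨τ, hτmem, rfl⟩ := Finset.mem_image.1 hπ'
    rw [Finset.mem_filter] at hτmem
    obtain ⟨hτNC, hτtop⟩ := hτmem
    simp only [NC, Finset.mem_filter, Finset.mem_univ, true_and] at hτNC
    obtain ⟨hτp, hτnc⟩ := hτNC
    set f := ⇑((SB sfun s B).orderEmbOfFin rfl) with hf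
    have hfinj : Function.Injective f := ((SB sfun s B).orderEmbOfFin rfl).injective
    have hsub : ∀ V ∈ τ.image (Finset.image f), V ⊆ SB sfun s B := by
      rintro V hV
      obtain ⟨W, _, rfl⟩ := Finset.mem_image.1 hV
      intro z hz
      obtain ⟨k, _, rfl⟩ := Finset.mem_image.1 hz
      exact Finset.orderEmbOfFin_mem _ _ _
    refine ⟨?_, ?_, ?_, ?_⟩
    · intro V hV
      obtain ⟨W, hW, rfl⟩ := Finset.mem_image.1 hV
      obtain ⟨k, hk⟩ := hτp.1 W hW
      exact ⟨⟨f k, Finset.mem_image_of_mem f hk⟩, hsub _ hV⟩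
    · intro z hz
      have : z ∈ Set.range f := by rw [hf, Finset.range_orderEmbOfFin]; exact hz
      obtain ⟨k, rfl⟩ := this
      obtain ⟨W, ⟨hW, hkW⟩, hWu⟩ := hτp.2 k
      refine ⟨W.image f, ⟨Finset.mem_image_of_mem _ hW, Finset.mem_image_of_mem f hkW⟩, ?_⟩
      rintro V ⟨hV, hzV⟩
      obtain ⟨W', hW', rfl⟩ := Finset.mem_image.1 hV
      obtain ⟨k', hk', hfk'⟩ := Finset.mem_image.1 hzV
      have : k' = k := hfinj hfk'
      rw [hWu W' ⟨hW', this ▸ hk'⟩]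
    · intro p q r u hh1 hh2 hh3 V hV W hW hpV hrV hqW huW
      obtain ⟨W1, hW1, rfl⟩ := Finset.mem_image.1 hV
      obtain ⟨W2, hW2, rfl⟩ := Finset.mem_image.1 hW
      obtain ⟨kp, hkp, hfp⟩ := Finset.mem_image.1 hpV
      obtain ⟨kr, hkr, hfr⟩ := Finset.mem_image.1 hrV
      obtain ⟨kq, hkq, hfq⟩ := Finset.mem_image.1 hqW
      obtain ⟨ku, hku, hfu⟩ := Finset.mem_image.1 huW
      have hmono' : ∀ a b : Fin (SB sfun s B).card, f a < f b ↔ a < b :=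
        fun a b => OrderEmbedding.lt_iff_lt _
      have h12 : kp < kq := (hmono' kp kq).1 (by rw [hfp, hfq]; exact hh1)
      have h23 : kq < kr := (hmono' kq kr).1 (by rw [hfq, hfr]; exact hh2)
      have h34 : kr < ku := (hmono' kr ku).1 (by rw [hfr, hfu]; exact hh3)
      rw [hτnc kp kq kr ku h12 h23 h34 W1 hW1 W2 hW2 hkp hkr hkq hku]
    · intro i hi i' hi'
      have htotal := (comp_eq_top_iff hsubmono hmpos hsubfirst hsublast).1 hτtop
      have : i ∈ Set.range f := by rw [hf, Finset.range_orderEmbOfFin]; exact hi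
      obtain ⟨k, rfl⟩ := this
      have : i' ∈ Set.range f := by rw [hf, Finset.range_orderEmbOfFin]; exact hi'
      obtain ⟨k', rfl⟩ := this
      have := (gconn_image hfinj).1 (htotal k k')
      rwa [gens_image_eq hmono hn h1 hlast hBne hsub rfl] at this
  · rintro ⟨hne, hcover, hnc, hconn⟩
    set f := ⇑((SB sfun s B).orderEmbOfFin rfl) with hf
    have hfinj : Function.Injective f := ((SB sfun s B).orderEmbOfFin rfl).injective
    set τ := π'.image (pull (SB sfun s B)) with hτdef
    have hsub : ∀ V ∈ π', V ⊆ SB sfun s B := fun V hV => (hne V hV).2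
    have hpush : τ.image (Finset.image f) = π' := by
      rw [hτdef, Finset.image_image]
      have : ∀ V ∈ π', (Finset.image f ∘ pull (SB sfun s B)) V = V := by
        intro V hV
        exact image_pull (hsub V hV)
      rw [Finset.image_congr (fun V hV => this V hV), Finset.image_id']
    refine Finset.mem_image.2 ⟨τ, ?_, hpush⟩
    rw [Finset.mem_filter]
    have hτp : IsPartition τ := by
      constructor
      · intro W hW
        obtain ⟨V, hV, rfl⟩ := Finset.mem_image.1 hW
        obtain ⟨z, hz⟩ := (hne V hV).1
        have : z ∈ Set.range f := by rw [hf, Finset.range_orderEmbOfFin]; exact hsub V hV hz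
        obtain ⟨k, rfl⟩ := this
        exact ⟨k, mem_pull.2 hz⟩
      · intro k
        obtain ⟨V, ⟨hV, hkV⟩, hVu⟩ := hcover (f k) (Finset.orderEmbOfFin_mem _ _ _)
        refine ⟨pull (SB sfun s B) V, ⟨Finset.mem_image_of_mem _ hV, mem_pull.2 hkV⟩, ?_⟩
        rintro W ⟨hW, hkW⟩
        obtain ⟨V', hV', rfl⟩ := Finset.mem_image.1 hW
        rw [hVu V' ⟨hV', mem_pull.1 hkW⟩]
    have hτnc : IsNonCrossing τ := by
      intro kp kq kr ku hh1 hh2 hh3 W1 hW1 W2 hW2 hkp hkr hkq hku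
      obtain ⟨V1, hV1, rfl⟩ := Finset.mem_image.1 hW1
      obtain ⟨V2, hV2, rfl⟩ := Finset.mem_image.1 hW2
      have hmono' : ∀ a b : Fin (SB sfun s B).card, f a < f b ↔ a < b :=
        fun a b => OrderEmbedding.lt_iff_lt _
      rw [hnc (f kp) (f kq) (f kr) (f ku) ((hmono' _ _).2 hh1) ((hmono' _ _).2 hh2)
        ((hmono' _ _).2 hh3)
        V1 hV1 V2 hV2 (mem_pull.1 hkp) (mem_pull.1 hkr) (mem_pull.1 hkq) (mem_pull.1 hku)]
    have hτNC : τ ∈ NC (SB sfun s B).card := by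
      simp only [NC, Finset.mem_filter, Finset.mem_univ, true_and]
      exact ⟨hτp, hτnc⟩
    refine ⟨hτNC, ?_⟩
    rw [comp_eq_top_iff hsubmono hmpos hsubfirst hsublast]
    intro k k'
    rw [gconn_image hfinj, gens_image_eq hmono hn h1 hlast hBne hsub hpush]
    exact hconn (f k) (Finset.orderEmbOfFin_mem _ _ _) (f k') (Finset.orderEmbOfFin_mem _ _ _)

end ConnBSec

section ProdSec

variable {s n : ℕ} {sfun : Fin n → ℕ}

lemma restrict_eq_comp {β : Type*} {N : ℕ} (x : Fin N → β) (V : Finset (Fin N)) :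
    restrict x V = fun i => x (V.orderEmbOfFin rfl i) := by
  funext i
  show x _ = x _
  rw [Finset.coe_orderIsoOfFin_apply]

lemma card_filter_window {c d : ℕ} (hd : d ≤ s) :
    (Finset.univ.filter (fun m : Fin s => c ≤ (m : ℕ) ∧ (m : ℕ) < d)).card = d - c := by
  have himg : (Finset.univ.filter (fun m : Fin s => c ≤ (m : ℕ) ∧ (m : ℕ) < d)).image
      (fun m : Fin s => (m : ℕ)) = Finset.Ico c d := by
    ext a
    simp only [Finset.mem_image, Finset.mem_filter, Finset.mem_univ, true_and,
      Finset.mem_Ico]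
    constructor
    · rintro ⟨m, ⟨hm1, hm2⟩, rfl⟩
      exact ⟨hm1, hm2⟩
    · rintro ⟨ha1, ha2⟩
      exact ⟨⟨a, by omega⟩, ⟨ha1, ha2⟩, rfl⟩
  rw [← Nat.card_Ico c d, ← himg,
    Finset.card_image_of_injective _ Fin.val_injective]

variable (hmono : StrictMono sfun) (hn : 1 ≤ n) (h1 : 1 ≤ sfun ⟨0, hn⟩)
  (hlast : sfun ⟨n - 1, Nat.sub_lt hn Nat.one_pos⟩ = s)
include hmono hn h1 hlast

lemma intervalBlock_card (j : Fin n) :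
    (intervalBlock (s := s) sfun j).card = sfun j - lo sfun j := by
  rw [intervalBlock]
  exact card_filter_window (sfun_le hmono hn h1 hlast j)

lemma intervalBlock_orderEmbOfFin (j : Fin n) (k : Fin (intervalBlock (s := s) sfun j).card) :
    ((intervalBlock (s := s) sfun j).orderEmbOfFin rfl k : Fin s) =
      ⟨lo sfun j + (k : ℕ), by
        have hk := k.isLt
        have hc := intervalBlock_card hmono hn h1 hlast j
        have := sfun_le hmono hn h1 hlast j
        omega⟩ := by
  have key : (fun k : Fin (intervalBlock (s := s) sfun j).card =>
      (⟨lo sfun j + (k : ℕ), by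
        have hk := k.isLt
        have hc := intervalBlock_card hmono hn h1 hlast j
        have := sfun_le hmono hn h1 hlast j
        omega⟩ : Fin s)) = ⇑((intervalBlock (s := s) sfun j).orderEmbOfFin rfl) := by
    apply Finset.orderEmbOfFin_unique
    · intro k
      rw [mem_intervalBlock]
      have hk := k.isLt
      have hc := intervalBlock_card hmono hn h1 hlast j
      constructor
      · simp
      · show lo sfun j + (k : ℕ) < sfun j
        omega
    · intro a b hab
      rw [Fin.lt_def]
      show lo sfun j + (a : ℕ) < lo sfun j + (b : ℕ)
      have : (a : ℕ) < (b : ℕ) := hab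
      omega
  exact (congrFun key k).symm

lemma ofFn_restrict_interval {A : Type*} (x : Fin s → A) (j : Fin n) :
    List.ofFn (restrict x (intervalBlock (s := s) sfun j)) =
      (((List.ofFn x).drop (lo sfun j)).take (sfun j - lo sfun j)) := by
  apply List.ext_getElem
  · rw [List.length_ofFn, List.length_take, List.length_drop, List.length_ofFn,
      intervalBlock_card hmono hn h1 hlast j]
    have := sfun_le hmono hn h1 hlast j
    omega
  · intro k h1' h2'
    rw [List.length_ofFn] at h1'
    rw [List.getElem_ofFn, List.getElem_take, List.getElem_drop, List.getElem_ofFn]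
    have e1 : restrict x (intervalBlock (s := s) sfun j) ⟨k, h1'⟩ =
        x ((intervalBlock (s := s) sfun j).orderEmbOfFin rfl ⟨k, h1'⟩) :=
      congrArg x (Finset.coe_orderIsoOfFin_apply _ _ _)
    rw [e1, intervalBlock_orderEmbOfFin hmono hn h1 hlast j]

lemma prod_take_a {A : Type*} [Ring A] (x : Fin s → A) (a : Fin n → A)
    (ha : ∀ j : Fin n,
      a j = (List.ofFn (restrict x (intervalBlock (s := s) sfun j))).prod)
    (j : ℕ) (hj : j ≤ n) :
    ((List.ofFn a).take j).prod =
      ((List.ofFn x).take (if h : j = 0 then 0 else sfun ⟨j - 1, by omega⟩)).prod := by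
  induction j with
  | zero => simp
  | succ j ih =>
      have hj' : j ≤ n := by omega
      have hjlt : j < n := by omega
      rw [List.prod_take_succ _ j (by rw [List.length_ofFn]; omega), ih hj']
      rw [List.getElem_ofFn]
      rw [ha ⟨j, hjlt⟩, ofFn_restrict_interval hmono hn h1 hlast]
      rw [dif_neg (by omega : ¬ j + 1 = 0)]
      have hloj : lo sfun ⟨j, hjlt⟩ = if h : j = 0 then 0 else sfun ⟨j - 1, by omega⟩ := by
        unfold lo
        by_cases h : j = 0
        · rw [dif_pos h, if_pos (by exact h)]
        · rw [dif_neg h, if_neg (by exact h)]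
      rw [← hloj]
      rw [show (⟨j + 1 - 1, by omega⟩ : Fin n) = ⟨j, hjlt⟩ from rfl]
      rw [← List.prod_append, ← List.take_add]
      congr 2
      have : lo sfun ⟨j, hjlt⟩ ≤ sfun ⟨j, hjlt⟩ :=
        (lo_lt hmono hn h1 hlast ⟨j, hjlt⟩).le
      omega

lemma prod_a_eq_prod_x {A : Type*} [Ring A] (x : Fin s → A) (a : Fin n → A)
    (ha : ∀ j : Fin n,
      a j = (List.ofFn (restrict x (intervalBlock (s := s) sfun j))).prod) :
    (List.ofFn a).prod = (List.ofFn x).prod := by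
  have := prod_take_a hmono hn h1 hlast x a ha n (le_refl n)
  rw [dif_neg (by omega : ¬ n = 0)] at this
  rw [hlast] at this
  have h2 : (List.ofFn a).take n = List.ofFn a := List.take_of_length_le (by simp)
  have h3 : (List.ofFn x).take s = List.ofFn x := List.take_of_length_le (by simp)
  rw [← h2, this, h3]

end ProdSec

section UnivSec

variable {n : ℕ}

lemma univ_mem_NC (hn : 1 ≤ n) : ({Finset.univ} : Finset (Finset (Fin n))) ∈ NC n := by
  classical
  simp only [NC, Finset.mem_filter, Finset.mem_univ, true_and]
  refine ⟨⟨?_, ?_⟩, ?_⟩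
  · intro V hV
    rw [Finset.mem_singleton] at hV
    subst hV
    exact ⟨⟨0, hn⟩, Finset.mem_univ _⟩
  · intro i
    exact ⟨Finset.univ, ⟨Finset.mem_singleton_self _, Finset.mem_univ _⟩,
      fun W hW => Finset.mem_singleton.1 hW.1⟩
  · intro p q r u _ _ _ V hV W hW _ _ _ _
    rw [Finset.mem_singleton.1 hV, Finset.mem_singleton.1 hW]

lemma univ_orderEmbOfFin (k : Fin (Finset.univ : Finset (Fin n)).card) :
    ((Finset.univ : Finset (Fin n)).orderEmbOfFin rfl k : Fin n) =
      Fin.cast (by simp) k := by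
  have key : (fun k : Fin (Finset.univ : Finset (Fin n)).card =>
      (Fin.cast (by simp : (Finset.univ : Finset (Fin n)).card = n) k : Fin n)) =
      ⇑((Finset.univ : Finset (Fin n)).orderEmbOfFin rfl) := by
    apply Finset.orderEmbOfFin_unique
    · intro x; exact Finset.mem_univ _
    · intro a b hab
      rw [Fin.lt_def]
      exact hab
  exact (congrFun key k).symm

lemma kappa_univ {A R : Type*} (κ : ∀ m : ℕ, (Fin m → A) → R) (a : Fin n → A) :
    κ (Finset.univ : Finset (Fin n)).card (restrict a Finset.univ) = κ n a := by
  rw [kappa_cast κ (by simp : (Finset.univ : Finset (Fin n)).card = n)]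
  congr 1
  funext i
  rw [restrict_eq_comp]
  show a _ = a i
  congr 1
  rw [univ_orderEmbOfFin]
  ext
  simp
  rfl

end UnivSec

section PushSec

variable {N : ℕ} {A : Type*}

lemma comp_eq_restrict (x : Fin N → A) (S : Finset (Fin N)) :
    (x ∘ ⇑(S.orderEmbOfFin rfl)) = restrict x S := by
  funext i
  rw [restrict_eq_comp]
  rfl

lemma restrict_push (x : Fin N → A) (S : Finset (Fin N)) (W : Finset (Fin S.card))
    (k : Fin ((W.image ⇑(S.orderEmbOfFin rfl)).card)) :
    restrict x (W.image ⇑(S.orderEmbOfFin rfl)) k =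
      restrict (restrict x S) W
        (Fin.cast (Finset.card_image_of_injective W (S.orderEmbOfFin rfl).injective) k) := by
  rw [restrict_image x _ ((S.orderEmbOfFin rfl)).strictMono W
    (Finset.card_image_of_injective W (S.orderEmbOfFin rfl).injective) k]
  rw [comp_eq_restrict]

lemma kappa_push {R : Type*} (κ : ∀ m : ℕ, (Fin m → A) → R) (x : Fin N → A)
    (S : Finset (Fin N)) (W : Finset (Fin S.card)) :
    κ (W.image ⇑(S.orderEmbOfFin rfl)).card (restrict x (W.image ⇑(S.orderEmbOfFin rfl))) =
      κ W.card (restrict (restrict x S) W) := by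
  rw [kappa_cast κ (Finset.card_image_of_injective W (S.orderEmbOfFin rfl).injective)]
  congr 1
  funext i
  rw [restrict_push]
  exact congrArg _ (Fin.ext rfl)

lemma ofFn_push (x : Fin N → A) (S : Finset (Fin N)) (W : Finset (Fin S.card)) :
    List.ofFn (restrict x (W.image ⇑(S.orderEmbOfFin rfl))) =
      List.ofFn (restrict (restrict x S) W) := by
  rw [List.ofFn_congr (Finset.card_image_of_injective W (S.orderEmbOfFin rfl).injective)
    (restrict x (W.image ⇑(S.orderEmbOfFin rfl)))]
  congr 1
  funext i
  rw [restrict_push]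
  exact congrArg _ (Fin.ext rfl)

end PushSec

section MoreHelpers

open Classical

variable {s n : ℕ} {sfun : Fin n → ℕ}

lemma block_ne_univ {σ : Finset (Finset (Fin n))} (hσp : IsPartition σ)
    (hσne : σ ≠ {Finset.univ}) {B : Finset (Fin n)} (hB : B ∈ σ) : B ≠ Finset.univ := by
  intro hBu
  apply hσne
  ext W
  simp only [Finset.mem_singleton]
  constructor
  · intro hW
    obtain ⟨w, hw⟩ := hσp.1 W hW
    have : W = B := hσp.mem_unique hW hB hw (hBu ▸ Finset.mem_univ w)
    rw [this, hBu]
  · rintro rfl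
    rwa [← hBu]

variable (hmono : StrictMono sfun) (hn : 1 ≤ n) (h1 : 1 ≤ sfun ⟨0, hn⟩)
  (hlast : sfun ⟨n - 1, Nat.sub_lt hn Nat.one_pos⟩ = s)
include hmono hn h1 hlast

lemma idx_mono {p q : Fin s} (h : p ≤ q) :
    idx hmono hn h1 hlast p ≤ idx hmono hn h1 hlast q := by
  by_contra hc
  push_neg at hc
  exact absurd (interval_mono hmono hc (idx_spec hmono hn h1 hlast q)
    (idx_spec hmono hn h1 hlast p)) (not_lt.2 h)

lemma idx_strict {p q : Fin s} (h : p < q)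
    (hne : idx hmono hn h1 hlast p ≠ idx hmono hn h1 hlast q) :
    idx hmono hn h1 hlast p < idx hmono hn h1 hlast q :=
  lt_of_le_of_ne (idx_mono hmono hn h1 hlast h.le) hne

lemma SB_card_lt {B : Finset (Fin n)} (hB : B ≠ Finset.univ) : (SB sfun s B).card < s := by
  have hsub : SB sfun s B ⊆ Finset.univ := Finset.subset_univ _
  obtain ⟨j, hj⟩ : ∃ j : Fin n, j ∉ B := by
    by_contra hc
    push_neg at hc
    exact hB (Finset.eq_univ_iff_forall.2 hc)
  obtain ⟨z, hz⟩ := interval_nonempty hmono hn h1 hlast j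
  have hzn : z ∉ SB sfun s B := by
    rw [mem_SB_idx hmono hn h1 hlast, idx_unique hmono hn h1 hlast hz]
    exact hj
  calc (SB sfun s B).card < (Finset.univ : Finset (Fin s)).card :=
      Finset.card_lt_card ⟨hsub, fun hcon => hzn (hcon (Finset.mem_univ z))⟩
    _ = s := by simp

lemma SB_disjoint_blocks {σ : Finset (Finset (Fin n))} (hσp : IsPartition σ)
    {B B' : Finset (Fin n)} (hB : B ∈ σ) (hB' : B' ∈ σ) {z : Fin s}
    (hz : z ∈ SB sfun s B) (hz' : z ∈ SB sfun s B') : B = B' :=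
  hσp.mem_unique hB hB' ((mem_SB_idx hmono hn h1 hlast).1 hz)
    ((mem_SB_idx hmono hn h1 hlast).1 hz')

end MoreHelpers

section BlockEvalSec

open Classical

variable {s n : ℕ} {sfun : Fin n → ℕ} {A R : Type*} [Ring A] [CommRing R]

lemma block_eval (κ : ∀ m : ℕ, (Fin m → A) → R) (x : Fin s → A) (B : Finset (Fin n))
    (aB : Fin B.card → A)
    (hIH : κ B.card aB =
      ∑ τ ∈ (NC (SB sfun s B).card).filter
          (fun τ => comp (subSfun sfun s B) (SB sfun s B).card τ = {Finset.univ}),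
        ∏ W ∈ τ, κ W.card (restrict (restrict x (SB sfun s B)) W)) :
    κ B.card aB = ∑ π' ∈ ConnB sfun s B, ∏ V ∈ π', κ V.card (restrict x V) := by
  rw [hIH, ConnB]
  rw [Finset.sum_image (by
    intro τ hτ τ' hτ' he
    exact Finset.image_injective (Finset.image_injective
      ((SB sfun s B).orderEmbOfFin rfl).injective) he)]
  apply Finset.sum_congr rfl
  intro τ hτ
  rw [Finset.prod_image (by
    intro W hW W' hW' he
    exact Finset.image_injective ((SB sfun s B).orderEmbOfFin rfl).injective he)]
  apply Finset.prod_congr rfl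
  intro W hW
  exact (kappa_push κ x (SB sfun s B) W).symm

end BlockEvalSec

section FiberSumSec

open Classical

variable {s n : ℕ} {sfun : Fin n → ℕ} {R : Type*} [CommRing R]

variable (hmono : StrictMono sfun) (hn : 1 ≤ n) (h1 : 1 ≤ sfun ⟨0, hn⟩)
  (hlast : sfun ⟨n - 1, Nat.sub_lt hn Nat.one_pos⟩ = s)
include hmono hn h1 hlast

lemma fiber_sum {σ : Finset (Finset (Fin n))} (hσp : IsPartition σ) (hσnc : IsNonCrossing σ)
    (g : Finset (Fin s) → R) :
    ∑ π ∈ (NC s).filter (fun π => comp sfun s π = σ), ∏ V ∈ π, g V =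
      ∏ B ∈ σ, ∑ π' ∈ ConnB sfun s B, ∏ V ∈ π', g V := by
  rw [Finset.prod_sum]
  refine Finset.sum_nbij' (fun π => fun B _ => π.filter (· ⊆ SB sfun s B))
    (fun p => σ.attach.biUnion (fun B => p B.1 B.2)) ?_ ?_ ?_ ?_ ?_
  · -- forward membership
    intro π hπ
    rw [Finset.mem_filter] at hπ
    obtain ⟨hπNC, hcomp⟩ := hπ
    have hπNC' := hπNC
    simp only [NC, Finset.mem_filter, Finset.mem_univ, true_and] at hπNC'
    obtain ⟨hπp, hπnc⟩ := hπNC'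
    obtain ⟨hblocks, hconn⟩ := (comp_eq_iff hmono hn h1 hlast hσp hπp).1 hcomp
    rw [Finset.mem_pi]
    intro B hB
    have hBne : B.Nonempty := hσp.1 B hB
    rw [mem_ConnB_iff hmono hn h1 hlast hBne]
    refine ⟨?_, ?_, ?_, ?_⟩
    · intro V hV
      rw [Finset.mem_filter] at hV
      exact ⟨hπp.1 V hV.1, hV.2⟩
    · intro z hz
      obtain ⟨V, ⟨hV, hzV⟩, hVu⟩ := hπp.2 z
      obtain ⟨B', hB', hVB'⟩ := hblocks V hV
      have hBB' : B = B' := SB_disjoint_blocks hmono hn h1 hlast hσp hB hB' hz (hVB' hzV)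
      refine ⟨V, ⟨Finset.mem_filter.2 ⟨hV, hBB' ▸ hVB'⟩, hzV⟩, ?_⟩
      rintro W ⟨hW, hzW⟩
      exact hVu W ⟨(Finset.mem_filter.1 hW).1, hzW⟩
    · intro p q r u hh1 hh2 hh3 V hV W hW hp hr hq hu
      exact hπnc p q r u hh1 hh2 hh3 V (Finset.mem_filter.1 hV).1 W
        (Finset.mem_filter.1 hW).1 hp hr hq hu
    · intro i hi i' hi'
      have := hconn B hB i hi i' hi'
      have hge : gensB sfun s π B = gensB sfun s (π.filter (· ⊆ SB sfun s B)) B := by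
        unfold gensB
        congr 1
        rw [Finset.filter_filter]
        apply Finset.filter_congr
        intro V _
        simp only [and_self]
      rwa [hge] at this
  · -- backward membership
    intro p hp
    rw [Finset.mem_pi] at hp
    rw [Finset.mem_filter]
    have hprops : ∀ (B : Finset (Fin n)) (hB : B ∈ σ),
        (∀ V ∈ p B hB, V.Nonempty ∧ V ⊆ SB sfun s B) ∧
        (∀ z ∈ SB sfun s B, ∃! V, V ∈ p B hB ∧ z ∈ V) ∧
        IsNonCrossing (p B hB) ∧
        (∀ i ∈ SB sfun s B, ∀ i' ∈ SB sfun s B, Gconn (gensB sfun s (p B hB) B) i i') :=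
      fun B hB => (mem_ConnB_iff hmono hn h1 hlast (hσp.1 B hB)).1 (hp B hB)
    set π := σ.attach.biUnion (fun B => p B.1 B.2) with hπdef
    have hmem : ∀ {V}, V ∈ π ↔ ∃ B : {x // x ∈ σ}, V ∈ p B.1 B.2 := by
      intro V
      rw [hπdef, Finset.mem_biUnion]
      constructor
      · rintro ⟨B, _, h⟩; exact ⟨B, h⟩
      · rintro ⟨B, h⟩; exact ⟨B, Finset.mem_attach _ _, h⟩
    have hπp : IsPartition π := by
      constructor
      · intro V hV
        obtain ⟨B, hVB⟩ := hmem.1 hV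
        exact ((hprops B.1 B.2).1 V hVB).1
      · intro z
        obtain ⟨B0, ⟨hB0, hidxB0⟩, hB0u⟩ := hσp.2 (idx hmono hn h1 hlast z)
        have hzSB : z ∈ SB sfun s B0 := (mem_SB_idx hmono hn h1 hlast).2 hidxB0
        obtain ⟨V, ⟨hV, hzV⟩, hVu⟩ := (hprops B0 hB0).2.1 z hzSB
        refine ⟨V, ⟨hmem.2 ⟨⟨B0, hB0⟩, hV⟩, hzV⟩, ?_⟩
        rintro W ⟨hW, hzW⟩
        obtain ⟨B1, hWB1⟩ := hmem.1 hW
        have hzSB1 : z ∈ SB sfun s B1.1 := ((hprops B1.1 B1.2).1 W hWB1).2 hzW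
        have : B1.1 = B0 := hB0u B1.1 ⟨B1.2, (mem_SB_idx hmono hn h1 hlast).1 hzSB1⟩
        apply hVu
        refine ⟨?_, hzW⟩
        have hB1eq : B1 = ⟨B0, hB0⟩ := Subtype.ext this
        rwa [hB1eq] at hWB1
      
    have hπnc : IsNonCrossing π := by
      intro p' q' r' u' hh1 hh2 hh3 V hV W hW hp' hr' hq' hu'
      obtain ⟨B1, hVB1⟩ := hmem.1 hV
      obtain ⟨B2, hWB2⟩ := hmem.1 hW
      by_cases hBB : B1 = B2
      · subst hBB
        exact (hprops B1.1 B1.2).2.2.1 p' q' r' u' hh1 hh2 hh3 V hVB1 W hWB2 hp' hr' hq' hu'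
      · exfalso
        have hVsub := ((hprops B1.1 B1.2).1 V hVB1).2
        have hWsub := ((hprops B2.1 B2.2).1 W hWB2).2
        have hd : ∀ z ∈ SB sfun s B1.1, ∀ z' ∈ SB sfun s B2.1,
            idx hmono hn h1 hlast z ≠ idx hmono hn h1 hlast z' := by
          intro z hz z' hz' he
          apply hBB
          apply Subtype.ext
          apply hσp.mem_unique B1.2 B2.2 ((mem_SB_idx hmono hn h1 hlast).1 hz)
          rw [he]
          exact (mem_SB_idx hmono hn h1 hlast).1 hz'
        have h12 := idx_strict hmono hn h1 hlast hh1
          (hd _ (hVsub hp') _ (hWsub hq'))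
        have h23 := idx_strict hmono hn h1 hlast hh2
          (fun he => (hd _ (hVsub hr') _ (hWsub hq')) he.symm)
        have h34 := idx_strict hmono hn h1 hlast hh3
          (hd _ (hVsub hr') _ (hWsub hu'))
        have := hσnc _ _ _ _ h12 h23 h34 B1.1 B1.2 B2.1 B2.2
          ((mem_SB_idx hmono hn h1 hlast).1 (hVsub hp'))
          ((mem_SB_idx hmono hn h1 hlast).1 (hVsub hr'))
          ((mem_SB_idx hmono hn h1 hlast).1 (hWsub hq'))
          ((mem_SB_idx hmono hn h1 hlast).1 (hWsub hu'))
        exact hBB (Subtype.ext this)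
    have hπNC : π ∈ NC s := by
      simp only [NC, Finset.mem_filter, Finset.mem_univ, true_and]
      exact ⟨hπp, hπnc⟩
    refine ⟨hπNC, ?_⟩
    rw [comp_eq_iff hmono hn h1 hlast hσp hπp]
    constructor
    · intro V hV
      obtain ⟨B, hVB⟩ := hmem.1 hV
      exact ⟨B.1, B.2, ((hprops B.1 B.2).1 V hVB).2⟩
    · intro B hB i hi i' hi'
      have hsub2 : gensB sfun s (p B hB) B ⊆ gensB sfun s π B := by
        unfold gensB
        intro S hS
        rcases Finset.mem_union.1 hS with h | h
        · rw [Finset.mem_filter] at h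
          exact Finset.mem_union_left _ (Finset.mem_filter.2
            ⟨hmem.2 ⟨⟨B, hB⟩, h.1⟩, h.2⟩)
        · exact Finset.mem_union_right _ h
      exact gconn_mono hsub2 ((hprops B hB).2.2.2 i hi i' hi')
  · -- left inverse
    intro π hπ
    rw [Finset.mem_filter] at hπ
    obtain ⟨hπNC, hcomp⟩ := hπ
    have hπNC' := hπNC
    simp only [NC, Finset.mem_filter, Finset.mem_univ, true_and] at hπNC'
    obtain ⟨hπp, hπnc⟩ := hπNC'
    obtain ⟨hblocks, _⟩ := (comp_eq_iff hmono hn h1 hlast hσp hπp).1 hcomp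
    ext V
    rw [Finset.mem_biUnion]
    constructor
    · rintro ⟨B, _, hV⟩
      exact (Finset.mem_filter.1 hV).1
    · intro hV
      obtain ⟨B, hB, hVB⟩ := hblocks V hV
      exact ⟨⟨B, hB⟩, Finset.mem_attach _ _, Finset.mem_filter.2 ⟨hV, hVB⟩⟩
  · -- right inverse
    intro p hp
    rw [Finset.mem_pi] at hp
    have hprops : ∀ (B : Finset (Fin n)) (hB : B ∈ σ),
        (∀ V ∈ p B hB, V.Nonempty ∧ V ⊆ SB sfun s B) :=
      fun B hB => ((mem_ConnB_iff hmono hn h1 hlast (hσp.1 B hB)).1 (hp B hB)).1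
    funext B hB
    ext V
    rw [Finset.mem_filter, Finset.mem_biUnion]
    constructor
    · rintro ⟨⟨⟨B1v, hB1m⟩, _, hVB1⟩, hVsub⟩
      have hsub1 := (hprops B1v hB1m V hVB1).2
      obtain ⟨v, hv⟩ := (hprops B1v hB1m V hVB1).1
      have hBe : B1v = B := SB_disjoint_blocks hmono hn h1 hlast hσp hB1m hB
        (hsub1 hv) (hVsub hv)
      subst hBe
      exact hVB1
    · intro hV
      exact ⟨⟨⟨B, hB⟩, Finset.mem_attach _ _, hV⟩, (hprops B hB V hV).2⟩
  · -- summand equality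
    intro π hπ
    rw [Finset.mem_filter] at hπ
    obtain ⟨hπNC, hcomp⟩ := hπ
    have hπNC' := hπNC
    simp only [NC, Finset.mem_filter, Finset.mem_univ, true_and] at hπNC'
    obtain ⟨hπp, hπnc⟩ := hπNC'
    obtain ⟨hblocks, _⟩ := (comp_eq_iff hmono hn h1 hlast hσp hπp).1 hcomp
    have hπun : π = σ.attach.biUnion (fun B => π.filter (· ⊆ SB sfun s B.1)) := by
      ext V
      rw [Finset.mem_biUnion]
      constructor
      · intro hV
        obtain ⟨B, hB, hVB⟩ := hblocks V hV
        exact ⟨⟨B, hB⟩, Finset.mem_attach _ _, Finset.mem_filter.2 ⟨hV, hVB⟩⟩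
      · rintro ⟨B, _, hV⟩
        exact (Finset.mem_filter.1 hV).1
    conv_lhs => rw [hπun]
    rw [Finset.prod_biUnion]
    intro B1 _ B2 _ hne12
    simp only [Function.onFun]
    rw [Finset.disjoint_left]
    intro V hV1 hV2
    rw [Finset.mem_filter] at hV1 hV2
    obtain ⟨v, hv⟩ := hπp.1 V hV1.1
    exact hne12 (Subtype.ext (SB_disjoint_blocks hmono hn h1 hlast hσp B1.2 B2.2
      (hV1.2 hv) (hV2.2 hv)))

end FiberSumSec

section MainSec

open Classical

lemma main_key {A R : Type*} [Ring A] [CommRing R] (φ : A → R)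
    (κ : ∀ m : ℕ, (Fin m → A) → R) (hκ : MomentCumulant φ κ) :
    ∀ s : ℕ, ∀ (n : ℕ) (hn : 1 ≤ n) (sfun : Fin n → ℕ) (hmono : StrictMono sfun)
      (h1 : 1 ≤ sfun ⟨0, hn⟩) (hlast : sfun ⟨n - 1, Nat.sub_lt hn Nat.one_pos⟩ = s)
      (x : Fin s → A) (a : Fin n → A)
      (_ : ∀ j : Fin n, a j = (List.ofFn (restrict x (intervalBlock (s := s) sfun j))).prod),
      κ n a = ∑ π ∈ (NC s).filter (fun π => comp sfun s π = {Finset.univ}),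
        ∏ V ∈ π, κ V.card (restrict x V) := by
  intro s
  induction s using Nat.strong_induction_on with
  | _ s IH =>
  intro n hn sfun hmono h1 hlast x a ha
  have hs1 : 1 ≤ s := le_trans h1 (sfun_le hmono hn h1 hlast ⟨0, hn⟩)
  have hA := hκ n hn a
  have hB := hκ s hs1 x
  have hprod := prod_a_eq_prod_x hmono hn h1 hlast x a ha
  rw [hprod] at hA
  have hmapsto : ∀ π ∈ NC s, comp sfun s π ∈ NC n := by
    intro π hπ
    simp only [NC, Finset.mem_filter, Finset.mem_univ, true_and] at hπ ⊢
    exact ⟨comp_isPartition hmono hn h1 hlast,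
      comp_isNonCrossing hmono hn h1 hlast hπ.1 hπ.2⟩
  have hfib := Finset.sum_fiberwise_of_maps_to hmapsto
    (fun π => ∏ V ∈ π, κ V.card (restrict x V))
  have hstep : ∀ σ ∈ (NC n).erase {Finset.univ},
      ∏ B ∈ σ, κ B.card (restrict a B) =
        ∑ π ∈ (NC s).filter (fun π => comp sfun s π = σ),
          ∏ V ∈ π, κ V.card (restrict x V) := by
    intro σ hσe
    have hσne : σ ≠ {Finset.univ} := Finset.ne_of_mem_erase hσe
    have hσ : σ ∈ NC n := Finset.mem_of_mem_erase hσe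
    have hσ' := hσ
    simp only [NC, Finset.mem_filter, Finset.mem_univ, true_and] at hσ'
    obtain ⟨hσp, hσnc⟩ := hσ'
    rw [fiber_sum hmono hn h1 hlast hσp hσnc (fun V => κ V.card (restrict x V))]
    apply Finset.prod_congr rfl
    intro B hB
    have hBne : B.Nonempty := hσp.1 B hB
    have hBnu : B ≠ Finset.univ := block_ne_univ hσp hσne hB
    have hlt : (SB sfun s B).card < s := SB_card_lt hmono hn h1 hlast hBnu
    have hmpos : 1 ≤ B.card := card_B_pos hBne
    have haB : ∀ i : Fin B.card, restrict a B i =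
        (List.ofFn (restrict (restrict x (SB sfun s B))
          (intervalBlock (s := (SB sfun s B).card) (subSfun sfun s B) i))).prod := by
      intro i
      rw [restrict_eq_comp a B]
      show a (B.orderEmbOfFin rfl i) = _
      rw [ha (B.orderEmbOfFin rfl i)]
      rw [← push_interval hmono hn h1 hlast i]
      rw [ofFn_push]
    have hIH := IH (SB sfun s B).card hlt B.card hmpos (subSfun sfun s B)
      (subSfun_strictMono hmono hn h1 hlast)
      (subSfun_first hmono hn h1 hlast hBne)
      (subSfun_last hmono hn h1 hlast hBne)
      (restrict x (SB sfun s B)) (restrict a B) haB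
    exact block_eval κ x B (restrict a B) hIH
  have huniv : ({Finset.univ} : Finset (Finset (Fin n))) ∈ NC n := univ_mem_NC hn
  rw [← Finset.add_sum_erase _ _ huniv] at hA
  rw [← hfib, ← Finset.add_sum_erase _ _ huniv] at hB
  have hFuniv : ∏ B ∈ ({Finset.univ} : Finset (Finset (Fin n))),
      κ B.card (restrict a B) = κ n a := by
    rw [Finset.prod_singleton]
    exact kappa_univ κ a
  rw [hFuniv] at hA
  have hT := Finset.sum_congr rfl hstep
  have hcomb := hA.symm.trans hB
  rw [hT] at hcomb
  exact add_right_cancel hcomb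

end MainSec


open Classical in
/-- Formula for G-valued cumulants with products as entries:
`κ̃_n(a_1, …, a_n) = Σ_{π ∈ NC(s), π ∨ θ = 1_s} κ̃_π(x_1, …, x_s)`. -/
theorem grassmann_cumulant_of_products
    {A : Type*} [Ring A] [Algebra ℂ A]
    (φ : A →ₗ[ℂ] DualNumber ℂ) (hφ1 : φ 1 = 1)
    (κ : ∀ n : ℕ, (Fin n → A) → DualNumber ℂ)
    (hκ : MomentCumulant (⇑φ) κ)
    (s n : ℕ) (hn : 1 ≤ n) (sfun : Fin n → ℕ)
    (hmono : StrictMono sfun) (h1 : 1 ≤ sfun ⟨0, hn⟩)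
    (hlast : sfun ⟨n - 1, by omega⟩ = s)
    (x : Fin s → A) (a : Fin n → A)
    (ha : ∀ j : Fin n,
      a j = (List.ofFn (restrict x (intervalBlock (s := s) sfun j))).prod) :
    κ n a = ∑ π ∈ (NC s).filter (fun π =>
        ∀ ρ ∈ NC s, leP π ρ → leP (intervalPartition sfun s) ρ →
          ρ = {Finset.univ}),
      ∏ V ∈ π, κ V.card (restrict x V) := by
  have hkey := main_key (⇑φ) κ hκ s n hn sfun hmono h1 hlast x a ha
  rw [hkey]
  apply Finset.sum_congr _ (fun _ _ => rfl)
  apply Finset.filter_congr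
  intro π hπ
  exact (comp_eq_top_iff hmono hn h1 hlast).trans
    (cond_iff_total hmono hn h1 hlast hπ).symm

end InfFree
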